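/- arXiv:1909.13630 — 6 statements merged into one kernel-verified Lean document; each statement's English description precedes it below -/
import Mathlib

section
/- Let ρ be a pure density matrix on ℂ^d ⊗ ℂ^d ⊗ ℂ^d. Then Σ_{i,j,l}(t_{ijl}^{(1,2,3)})² ≤ 8(d³−1)/d³; equivalently, the Frobenius norm of the full correlation tensor satisfies ‖T^{(1,2,3)}‖ ≤ (2/d)·√(2(d³−1)/d). -/
open Matrix ComplexOrder

/-- The full `n`-body correlation tensor entry `t_{a 0, …, a (n-1)}` of `ρ`,
i.e. `tr (ρ · (λ_{a 0} ⊗ ⋯ ⊗ λ_{a (n-1)}))`. -/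
noncomputable def corrFull {n d : ℕ} (lam : Fin (d ^ 2 - 1) → Matrix (Fin d) (Fin d) ℂ)
    (ρ : Matrix (Fin n → Fin d) (Fin n → Fin d) ℂ) (a : Fin n → Fin (d ^ 2 - 1)) : ℝ :=
  (Matrix.trace (ρ * Matrix.of (fun v w : Fin n → Fin d => ∏ j, lam (a j) (v j) (w j)))).re

section KronPi
variable {n d : ℕ}

/-- The `n`-fold Kronecker-type product matrix. -/
noncomputable def kronPi (f : Fin n → Matrix (Fin d) (Fin d) ℂ) :
    Matrix (Fin n → Fin d) (Fin n → Fin d) ℂ :=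
  Matrix.of fun v w => ∏ j, f j (v j) (w j)

lemma kronPi_mul (f g : Fin n → Matrix (Fin d) (Fin d) ℂ) :
    kronPi f * kronPi g = kronPi fun j => f j * g j := by
  ext v w
  simp only [kronPi, Matrix.mul_apply, Matrix.of_apply]
  calc ∑ u : Fin n → Fin d, (∏ j, f j (v j) (u j)) * ∏ j, g j (u j) (w j)
      = ∑ u : Fin n → Fin d, ∏ j, f j (v j) (u j) * g j (u j) (w j) := by
        exact Finset.sum_congr rfl fun u _ => (Finset.prod_mul_distrib).symm
    _ = ∏ j, ∑ x : Fin d, f j (v j) x * g j x (w j) := by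
        rw [Fintype.prod_sum]

lemma kronPi_trace (f : Fin n → Matrix (Fin d) (Fin d) ℂ) :
    (kronPi f).trace = ∏ j, (f j).trace := by
  simp only [Matrix.trace, Matrix.diag, kronPi, Matrix.of_apply]
  rw [Fintype.prod_sum]

lemma kronPi_conjTranspose (f : Fin n → Matrix (Fin d) (Fin d) ℂ) :
    (kronPi f)ᴴ = kronPi fun j => (f j)ᴴ := by
  ext v w
  simp [kronPi, Matrix.conjTranspose_apply, map_prod]

lemma kronPi_one : (kronPi fun _ : Fin n => (1 : Matrix (Fin d) (Fin d) ℂ)) = 1 := by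
  ext v w
  by_cases h : v = w
  · subst h; simp [kronPi, Matrix.one_apply]
  · obtain ⟨j, hj⟩ := Function.ne_iff.mp h
    simp only [kronPi, Matrix.of_apply, Matrix.one_apply, h, if_false]
    exact Finset.prod_eq_zero (Finset.mem_univ j) (by simp [hj])

end KronPi

/-- A matrix viewed as a vector of the Euclidean (ℓ²) space on its index pairs. -/
noncomputable def toE {ι : Type*} [Fintype ι] (M : Matrix ι ι ℂ) :
    EuclideanSpace ℂ (ι × ι) := WithLp.toLp 2 (fun p : ι × ι => M p.1 p.2)

lemma inner_toE {ι : Type*} [Fintype ι] [DecidableEq ι] (A B : Matrix ι ι ℂ) :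
    (inner ℂ (toE A) (toE B) : ℂ) = (Aᴴ * B).trace := by
  simp only [PiLp.inner_apply, RCLike.inner_apply', PiLp.toLp_apply, toE, Matrix.trace, Matrix.diag,
    Matrix.mul_apply, Matrix.conjTranspose_apply]
  rw [Fintype.sum_prod_type]
  exact Finset.sum_comm

/-- For a pure tripartite state, `Σ (t_{ijl}^{(1,2,3)})² ≤ 8(d³-1)/d³`; equivalently
`‖T^{(1,2,3)}‖ ≤ (2/d)·√(2(d³-1)/d)`. -/
theorem full_correlation_bound_tripartite (d : ℕ) (hd : 2 ≤ d)
    (lam : Fin (d ^ 2 - 1) → Matrix (Fin d) (Fin d) ℂ)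
    (hherm : ∀ i, (lam i).IsHermitian)
    (htr : ∀ i, (lam i).trace = 0)
    (horth : ∀ i j, (lam i * lam j).trace = if i = j then 2 else 0)
    (ρ : Matrix (Fin 3 → Fin d) (Fin 3 → Fin d) ℂ)
    (hpsd : ρ.PosSemidef) (htrρ : ρ.trace = 1) (hpure : ρ * ρ = ρ) :
    (∑ i, ∑ j, ∑ l, (corrFull lam ρ ![i, j, l]) ^ 2) ≤ 8 * ((d : ℝ) ^ 3 - 1) / (d : ℝ) ^ 3
    ∧ Real.sqrt (∑ i, ∑ j, ∑ l, (corrFull lam ρ ![i, j, l]) ^ 2)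
        ≤ (2 / (d : ℝ)) * Real.sqrt (2 * ((d : ℝ) ^ 3 - 1) / (d : ℝ)) := by
  have hd0 : (0:ℝ) < (d:ℝ) := by positivity
  have hd3 : (0:ℝ) < (d:ℝ)^3 := by positivity
  -- the basis tensors
  set B : (Fin (d ^ 2 - 1) × Fin (d ^ 2 - 1) × Fin (d ^ 2 - 1)) → Matrix (Fin 3 → Fin d) (Fin 3 → Fin d) ℂ :=
    fun a => kronPi fun j => lam (![a.1, a.2.1, a.2.2] j) with hB
  have hBherm : ∀ a, (B a)ᴴ = B a := by
    intro a
    show (kronPi fun j => lam (![a.1, a.2.1, a.2.2] j))ᴴ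
        = kronPi fun j => lam (![a.1, a.2.1, a.2.2] j)
    rw [kronPi_conjTranspose]
    exact congrArg kronPi (funext fun j => (hherm _).eq)
  have hBtr : ∀ a b : (Fin (d ^ 2 - 1) × Fin (d ^ 2 - 1) × Fin (d ^ 2 - 1)), ((B a)ᴴ * (B b)).trace = if a = b then 8 else 0 := by
    intro a b
    obtain ⟨a1, a2, a3⟩ := a
    obtain ⟨b1, b2, b3⟩ := b
    rw [hBherm, hB, kronPi_mul, kronPi_trace, Fin.prod_univ_three]
    simp only [Matrix.cons_val_zero, Matrix.cons_val_one, Matrix.head_cons,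
      Matrix.cons_val_two, Matrix.tail_cons, horth]
    by_cases h1 : a1 = b1 <;> by_cases h2 : a2 = b2 <;> by_cases h3 : a3 = b3 <;>
      simp [Prod.ext_iff, h1, h2, h3] <;> norm_num
  have hcard : (1 : Matrix (Fin 3 → Fin d) (Fin 3 → Fin d) ℂ).trace = ((d:ℂ)^3) := by
    rw [Matrix.trace_one]
    simp [Fintype.card_fun]
  have hBtr0 : ∀ a : (Fin (d ^ 2 - 1) × Fin (d ^ 2 - 1) × Fin (d ^ 2 - 1)), (B a).trace = 0 := by
    intro a
    rw [hB, kronPi_trace, Fin.prod_univ_three]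
    simp [htr]
  -- the orthonormal family
  set v : Option (Fin (d ^ 2 - 1) × Fin (d ^ 2 - 1) × Fin (d ^ 2 - 1)) → EuclideanSpace ℂ ((Fin 3 → Fin d) × (Fin 3 → Fin d)) :=
    fun o => Option.rec (((Real.sqrt ((d:ℝ)^3) : ℝ) : ℂ)⁻¹ • toE 1)
      (fun a => (((Real.sqrt 8 : ℝ) : ℂ))⁻¹ • toE (B a)) o with hv
  have hsq3 : ((Real.sqrt ((d:ℝ)^3) : ℝ) : ℂ) * ((Real.sqrt ((d:ℝ)^3) : ℝ) : ℂ) = ((d:ℂ)^3) := by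
    rw [← Complex.ofReal_mul, Real.mul_self_sqrt hd3.le]
    push_cast; ring
  have hsq8 : ((Real.sqrt 8 : ℝ) : ℂ) * ((Real.sqrt 8 : ℝ) : ℂ) = 8 := by
    rw [← Complex.ofReal_mul, Real.mul_self_sqrt (by norm_num)]
    norm_num
  have hs3ne : ((Real.sqrt ((d:ℝ)^3) : ℝ) : ℂ) ≠ 0 :=
    Complex.ofReal_ne_zero.mpr (Real.sqrt_pos.mpr hd3).ne'
  have hs8ne : ((Real.sqrt 8 : ℝ) : ℂ) ≠ 0 :=
    Complex.ofReal_ne_zero.mpr (Real.sqrt_pos.mpr (by norm_num)).ne'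
  have hortho : Orthonormal ℂ v := by
    rw [orthonormal_iff_ite]
    rintro (_ | a) (_ | b)
    · simp only [hv, inner_smul_left, inner_smul_right, inner_toE, map_inv₀,
        Complex.conj_ofReal, Matrix.conjTranspose_one, one_mul, hcard]
      rw [← hsq3]
      field_simp
      simp
    · simp only [hv, inner_smul_left, inner_smul_right, inner_toE, map_inv₀,
        Complex.conj_ofReal, Matrix.conjTranspose_one, one_mul]
      rw [hBtr0 b]
      simp
    · simp only [hv, inner_smul_left, inner_smul_right, inner_toE, map_inv₀,
        Complex.conj_ofReal, hBherm]
      rw [mul_one, hBtr0 a]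
      simp
    · simp only [hv, inner_smul_left, inner_smul_right, inner_toE, map_inv₀,
        Complex.conj_ofReal, hBtr]
      by_cases hab : a = b
      · subst hab
        simp only [if_pos rfl, Option.some.injEq]
        rw [← hsq8]
        field_simp
        simp
      · simp [hab]
  -- Bessel's inequality
  have hbessel := hortho.sum_inner_products_le (toE ρ) (s := Finset.univ)
  -- the norm of ρ
  have hρnorm : ‖toE ρ‖ ^ 2 = 1 := by
    rw [← @inner_self_eq_norm_sq ℂ, inner_toE, hpsd.isHermitian.eq, hpure, htrρ]
    simp
  rw [hρnorm, Fintype.sum_option] at hbessel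
  -- identify the terms
  have hnone : ‖(inner ℂ (v none) (toE ρ) : ℂ)‖ ^ 2 = ((d:ℝ)^3)⁻¹ := by
    simp only [hv, inner_smul_left, inner_toE, map_inv₀, Complex.conj_ofReal,
      Matrix.conjTranspose_one, one_mul, htrρ, mul_one]
    rw [norm_inv, Complex.norm_real, Real.norm_eq_abs,
      abs_of_nonneg (Real.sqrt_nonneg _)]
    rw [inv_pow, Real.sq_sqrt hd3.le]
  have hsome : ∀ a : (Fin (d ^ 2 - 1) × Fin (d ^ 2 - 1) × Fin (d ^ 2 - 1)), ‖(inner ℂ (v (some a)) (toE ρ) : ℂ)‖ ^ 2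
      = (corrFull lam ρ ![a.1, a.2.1, a.2.2]) ^ 2 / 8 := by
    intro a
    have hz : ((B a) * ρ).trace = (ρ * B a).trace := Matrix.trace_mul_comm _ _
    have hreal : (starRingEnd ℂ) ((ρ * B a).trace) = (ρ * B a).trace := by
      calc (starRingEnd ℂ) ((ρ * B a).trace) = ((ρ * B a)ᴴ).trace := by
            rw [Matrix.trace_conjTranspose]; rfl
        _ = ((B a)ᴴ * ρᴴ).trace := by rw [Matrix.conjTranspose_mul]
        _ = ((B a) * ρ).trace := by rw [hBherm, hpsd.isHermitian.eq]
        _ = (ρ * B a).trace := hz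
    have him : ((ρ * B a).trace).im = 0 := by
      have h := congrArg Complex.im hreal
      rw [Complex.conj_im] at h
      linarith
    have hcorr : corrFull lam ρ ![a.1, a.2.1, a.2.2] = ((ρ * B a).trace).re := rfl
    have hzre : (ρ * B a).trace = (((ρ * B a).trace).re : ℂ) := by
      exact Complex.ext rfl (by simp [him])
    simp only [hv, inner_smul_left, inner_toE, map_inv₀, Complex.conj_ofReal, hBherm, hz]
    rw [hzre, ← Complex.ofReal_inv, ← Complex.ofReal_mul, Complex.norm_real,
      Real.norm_eq_abs, sq_abs, hcorr]
    rw [mul_pow, inv_pow, Real.sq_sqrt (by norm_num : (8:ℝ) ≥ 0)]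
    ring
  rw [hnone] at hbessel
  have hsum_eq : ∑ a : (Fin (d ^ 2 - 1) × Fin (d ^ 2 - 1) × Fin (d ^ 2 - 1)), ‖(inner ℂ (v (some a)) (toE ρ) : ℂ)‖ ^ 2
      = (∑ a : (Fin (d ^ 2 - 1) × Fin (d ^ 2 - 1) × Fin (d ^ 2 - 1)), (corrFull lam ρ ![a.1, a.2.1, a.2.2]) ^ 2) / 8 := by
    rw [Finset.sum_div]
    exact Finset.sum_congr rfl fun a _ => hsome a
  rw [hsum_eq] at hbessel
  -- convert the triple sum
  have hsum3 : (∑ i, ∑ j, ∑ l, (corrFull lam ρ ![i, j, l]) ^ 2)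
      = ∑ a : (Fin (d ^ 2 - 1) × Fin (d ^ 2 - 1) × Fin (d ^ 2 - 1)), (corrFull lam ρ ![a.1, a.2.1, a.2.2]) ^ 2 := by
    rw [Fintype.sum_prod_type]
    exact Finset.sum_congr rfl fun i _ => by rw [Fintype.sum_prod_type]
  have hmain : (∑ i, ∑ j, ∑ l, (corrFull lam ρ ![i, j, l]) ^ 2)
      ≤ 8 * ((d : ℝ) ^ 3 - 1) / (d : ℝ) ^ 3 := by
    rw [hsum3]
    have h8 : (∑ a : (Fin (d ^ 2 - 1) × Fin (d ^ 2 - 1) × Fin (d ^ 2 - 1)), (corrFull lam ρ ![a.1, a.2.1, a.2.2]) ^ 2)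
        ≤ 8 * (1 - ((d:ℝ)^3)⁻¹) := by linarith
    have : 8 * (1 - ((d:ℝ)^3)⁻¹) = 8 * ((d : ℝ) ^ 3 - 1) / (d : ℝ) ^ 3 := by
      field_simp
    linarith
  refine ⟨hmain, ?_⟩
  calc Real.sqrt (∑ i, ∑ j, ∑ l, (corrFull lam ρ ![i, j, l]) ^ 2)
      ≤ Real.sqrt (8 * ((d : ℝ) ^ 3 - 1) / (d : ℝ) ^ 3) := Real.sqrt_le_sqrt hmain
    _ = (2 / (d : ℝ)) * Real.sqrt (2 * ((d : ℝ) ^ 3 - 1) / (d : ℝ)) := by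
        rw [show (8 * ((d : ℝ) ^ 3 - 1) / (d : ℝ) ^ 3)
            = (2 / (d : ℝ))^2 * (2 * ((d : ℝ) ^ 3 - 1) / (d : ℝ)) by field_simp; ring]
        rw [Real.sqrt_mul (by positivity), Real.sqrt_sq (by positivity)]
end

section
/- (Lemma 1) Let ρ = ρ₁ ⊗ ρ₂ ⊗ ρ₃ ⊗ ρ₄ be a pure fully separable density matrix on (ℂ^d)^{⊗4} (each ρ_f a density matrix on ℂ^d). Then for every k = 1,…,d²−1, the Ky Fan k-norm of the matricization T_{1|2|3|4} equals 4(d−1)²/d². -/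
open Matrix ComplexOrder

/-- The singular values of a real matrix `M`: square roots of eigenvalues of `Mᴴ * M`. -/
noncomputable def singVals {α β : Type*} [Fintype α] [Fintype β] [DecidableEq β]
    (M : Matrix α β ℝ) : β → ℝ :=
  fun i => Real.sqrt ((Matrix.isHermitian_conjTranspose_mul_self M).eigenvalues i)

/-- The Ky Fan `k`-norm of a real matrix: the sum of its `k` largest singular values
(realized as the largest sum of singular values over index sets of size at most `k`). -/
noncomputable def kyFan {α β : Type*} [Fintype α] [Fintype β] [DecidableEq β]
    (k : ℕ) (M : Matrix α β ℝ) : ℝ :=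
  (Finset.univ.powerset.filter (fun s : Finset β => s.card ≤ k)).sup'
    ⟨∅, by simp⟩ (fun s => ∑ i ∈ s, singVals M i)

/- ### Auxiliary lemmas -/

lemma aux_trace_eq_sum_eig {𝕜 n : Type*} [RCLike 𝕜] [Fintype n] [DecidableEq n]
    {A : Matrix n n 𝕜} (hA : A.IsHermitian) :
    A.trace = ∑ i, (hA.eigenvalues i : 𝕜) := by
  conv_lhs => rw [hA.spectral_theorem, Unitary.conjStarAlgAut_apply]
  rw [trace_mul_comm, ← mul_assoc, Unitary.coe_star_mul_self, one_mul, trace_diagonal]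
  rfl

lemma aux_trace_sq_eq_sum_eig_sq {𝕜 n : Type*} [RCLike 𝕜] [Fintype n] [DecidableEq n]
    {A : Matrix n n 𝕜} (hA : A.IsHermitian) :
    (A * A).trace = ∑ i, ((hA.eigenvalues i : 𝕜))^2 := by
  set U : Matrix n n 𝕜 := (hA.eigenvectorUnitary : Matrix n n 𝕜) with hU
  set D : Matrix n n 𝕜 := diagonal (RCLike.ofReal ∘ hA.eigenvalues) with hD
  have h1 : star U * U = 1 := Unitary.coe_star_mul_self hA.eigenvectorUnitary
  have : A * A = U * (D * D) * star U := by
    conv_lhs => rw [hA.spectral_theorem, Unitary.conjStarAlgAut_apply]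
    rw [show U * D * star U * (U * D * star U) = U * D * (star U * U) * D * star U by
      simp [mul_assoc], h1]
    simp [mul_assoc]
  rw [this, trace_mul_cycle, ← mul_assoc, h1, one_mul, hD, diagonal_mul_diagonal, trace_diagonal]
  simp [pow_two]

lemma aux_trace_pairing {d : ℕ} (lam : Fin (d ^ 2 - 1) → Matrix (Fin d) (Fin d) ℂ)
    (htr : ∀ i, (lam i).trace = 0)
    (horth : ∀ i j, (lam i * lam j).trace = if i = j then 2 else 0)
    (o o' : Option (Fin (d ^ 2 - 1))) :
    ((o.elim 1 lam) * (o'.elim 1 lam)).trace =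
      if o = o' then (o.elim (d : ℂ) (fun _ => 2)) else 0 := by
  cases o <;> cases o' <;>
    simp [htr, horth, Matrix.trace_one, Option.some.injEq]

lemma aux_trace_sq_expand {d : ℕ} (lam : Fin (d ^ 2 - 1) → Matrix (Fin d) (Fin d) ℂ)
    (hd : 2 ≤ d) (htr : ∀ i, (lam i).trace = 0)
    (horth : ∀ i j, (lam i * lam j).trace = if i = j then 2 else 0)
    (M : Matrix (Fin d) (Fin d) ℂ) (hM : M.trace = 1) :
    (M * M).trace = 1 / d + ∑ i, ((M * lam i).trace)^2 / 2 := by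
  have hd0 : (d : ℂ) ≠ 0 := Nat.cast_ne_zero.mpr (by omega)
  set b : Option (Fin (d ^ 2 - 1)) → Matrix (Fin d) (Fin d) ℂ := fun o => o.elim 1 lam with hb
  have hpair := aux_trace_pairing lam htr horth
  have hν : ∀ o : Option (Fin (d ^ 2 - 1)), (o.elim (d : ℂ) (fun _ => 2)) ≠ 0 := by
    rintro (_|_) <;> simp [hd0]
  have hli : LinearIndependent ℂ b := by
    rw [Fintype.linearIndependent_iff]
    intro g hg j
    have h0 : ((∑ o, g o • b o) * b j).trace = 0 := by rw [hg, zero_mul, trace_zero]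
    rw [Finset.sum_mul] at h0
    simp_rw [smul_mul_assoc, trace_sum, trace_smul, hb, hpair] at h0
    rw [Finset.sum_eq_single j] at h0
    · simp at h0
      rcases h0 with h | h
      · exact h
      · exact absurd h (hν j)
    · intro o _ ho; simp [ho]
    · simp
  have hsq : 1 ≤ d ^ 2 := Nat.one_le_pow _ _ (by omega)
  have hcard : Fintype.card (Option (Fin (d ^ 2 - 1)))
      = Module.finrank ℂ (Matrix (Fin d) (Fin d) ℂ) := by
    rw [Module.finrank_matrix]
    simp only [Fintype.card_option, Fintype.card_fin]
    rw [Nat.sub_add_cancel hsq, pow_two, Module.finrank_self, mul_one]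
  have hspan := hli.span_eq_top_of_card_eq_finrank hcard
  have hmem : M ∈ Submodule.span ℂ (Set.range b) := by rw [hspan]; trivial
  obtain ⟨c, hc⟩ := (Submodule.mem_span_range_iff_exists_fun ℂ).mp hmem
  have hcoef : ∀ o, (M * b o).trace = c o * (o.elim (d : ℂ) (fun _ => 2)) := by
    intro o
    conv_lhs => rw [← hc]
    rw [Finset.sum_mul]
    simp_rw [smul_mul_assoc, trace_sum, trace_smul, hb, hpair]
    rw [Finset.sum_eq_single o]
    · simp
    · intro o' _ ho; simp [ho]
    · simp
  have hMM : (M * M).trace = ∑ o, c o * (M * b o).trace := by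
    conv_lhs => rw [show M * M = M * (∑ o, c o • b o) by rw [hc]]
    rw [Finset.mul_sum]
    simp_rw [mul_smul_comm, trace_sum, trace_smul]
    simp [smul_eq_mul]
  have hc_none : c none = 1 / d := by
    have h := hcoef none
    simp only [hb, Option.elim, Matrix.mul_one, hM] at h
    rw [eq_div_iff hd0, ← h]
  have hc_some : ∀ i, c (some i) = (M * lam i).trace / 2 := by
    intro i
    have h := hcoef (some i)
    simp only [hb, Option.elim] at h
    rw [eq_div_iff (two_ne_zero' ℂ), ← h]
  rw [hMM, Fintype.sum_option]
  simp only [hb, Option.elim, Matrix.mul_one, hM, mul_one, hc_none, hc_some]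
  congr 1
  apply Finset.sum_congr rfl
  intro i _
  rw [pow_two]; ring

lemma aux_sum_pi_prod {n d : ℕ} (f : Fin n → Fin d → ℂ) :
    ∑ v : Fin n → Fin d, ∏ j, f j (v j) = ∏ j, ∑ p, f j p := by
  rw [Finset.prod_univ_sum]
  rw [Fintype.piFinset_univ]

lemma aux_trace_prod_mul {n d : ℕ} (A B : Fin n → Matrix (Fin d) (Fin d) ℂ) :
    ((Matrix.of fun v w : Fin n → Fin d => ∏ j, A j (v j) (w j)) *
      (Matrix.of fun v w : Fin n → Fin d => ∏ j, B j (v j) (w j))).trace =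
    ∏ j, (A j * B j).trace := by
  unfold Matrix.trace Matrix.diag
  simp only [Matrix.mul_apply, Matrix.of_apply]
  have h1 : ∀ v : Fin n → Fin d,
      ∑ w : Fin n → Fin d, (∏ j, A j (v j) (w j)) * ∏ j, B j (w j) (v j)
      = ∏ j, (A j * B j) (v j) (v j) := by
    intro v
    have := aux_sum_pi_prod (fun j q => A j (v j) q * B j q (v j))
    simp_rw [← Finset.prod_mul_distrib]
    rw [this]
    apply Finset.prod_congr rfl
    intro j _
    rw [Matrix.mul_apply]
  simp_rw [h1]
  exact aux_sum_pi_prod (fun j p => (A j * B j) p p)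

lemma aux_trace_mul_real {d : ℕ} {A B : Matrix (Fin d) (Fin d) ℂ}
    (hA : A.IsHermitian) (hB : B.IsHermitian) :
    (A * B).trace = (((A * B).trace.re : ℝ) : ℂ) := by
  have h : (starRingEnd ℂ) ((A * B).trace) = (A * B).trace := by
    have h2 : ((A * B)ᴴ).trace = star ((A * B).trace) := Matrix.trace_conjTranspose _
    rw [Matrix.conjTranspose_mul, hA.eq, hB.eq, trace_mul_comm] at h2
    exact h2.symm
  exact (Complex.conj_eq_iff_re.mp h).symm

/-- Ky Fan norm of a rank-one real matrix `x r * y c` with `Σx² * Σy² > 0`. -/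
lemma aux_kyFan_rank_one {α β : Type*} [Fintype α] [Fintype β] [DecidableEq β]
    (x : α → ℝ) (y : β → ℝ) (k : ℕ) (hk : 1 ≤ k)
    (hpos : 0 < (∑ r, x r ^ 2) * (∑ c, y c ^ 2)) :
    kyFan k (Matrix.of fun r c => x r * y c) =
      Real.sqrt ((∑ r, x r ^ 2) * (∑ c, y c ^ 2)) := by
  set M : Matrix α β ℝ := Matrix.of fun r c => x r * y c with hM
  set c0 : ℝ := (∑ r, x r ^ 2) * (∑ c, y c ^ 2) with hc0
  set hN : (Mᴴ * M).IsHermitian := Matrix.isHermitian_conjTranspose_mul_self M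
  set t : β → ℝ := hN.eigenvalues with ht
  have htnn : ∀ i, 0 ≤ t i := fun i => Matrix.eigenvalues_conjTranspose_mul_self_nonneg M i
  have hNapp : ∀ c c', (Mᴴ * M) c c' = (∑ r, x r ^ 2) * (y c * y c') := by
    intro c c'
    simp only [Matrix.mul_apply, Matrix.conjTranspose_apply, hM, Matrix.of_apply, star_trivial]
    rw [Finset.sum_mul]
    apply Finset.sum_congr rfl
    intro r _
    ring
  have htr1 : ∑ i, t i = c0 := by
    have h := aux_trace_eq_sum_eig hN
    simp only [RCLike.ofReal_real_eq_id, id_eq] at h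
    unfold Matrix.trace Matrix.diag at h
    simp_rw [hNapp, ← Finset.mul_sum, ← pow_two] at h
    rw [ht, ← h, hc0]
  have htr2 : ∑ i, t i ^ 2 = c0 ^ 2 := by
    have h := aux_trace_sq_eq_sum_eig_sq hN
    simp only [RCLike.ofReal_real_eq_id, id_eq] at h
    have h2 : ((Mᴴ * M) * (Mᴴ * M)).trace = c0 ^ 2 := by
      unfold Matrix.trace Matrix.diag
      simp only [Matrix.mul_apply, hNapp]
      have e1 : ∀ c : β, (∑ c' : β, ((∑ r, x r ^ 2) * (y c * y c')) *
          ((∑ r, x r ^ 2) * (y c' * y c)))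
          = ((∑ r, x r ^ 2) * y c ^ 2) * ∑ c' : β, ((∑ r, x r ^ 2) * y c' ^ 2) := by
        intro c
        rw [Finset.mul_sum]
        exact Finset.sum_congr rfl (fun c' _ => by ring)
      simp_rw [e1]
      rw [← Finset.sum_mul, ← Finset.mul_sum, hc0]
      ring
    rw [h2] at h
    exact h.symm
  have hall : ∀ i, t i = 0 ∨ t i = c0 := by
    have hz : ∑ i, t i * (c0 - t i) = 0 := by
      simp_rw [mul_sub]
      rw [Finset.sum_sub_distrib, ← Finset.sum_mul, htr1]
      simp_rw [← pow_two]
      rw [htr2]; ring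
    have hforall := (Finset.sum_eq_zero_iff_of_nonneg (fun i _ =>
      mul_nonneg (htnn i) (by
        have : t i ≤ ∑ j, t j := Finset.single_le_sum (fun j _ => htnn j) (Finset.mem_univ i)
        rw [htr1] at this; linarith))).mp hz
    intro i
    have h := hforall i (Finset.mem_univ i)
    rcases mul_eq_zero.mp h with h | h
    · exact Or.inl h
    · exact Or.inr (by linarith)
  obtain ⟨i₀, hi₀⟩ : ∃ i₀, t i₀ ≠ 0 := by
    by_contra h
    push_neg at h
    rw [Finset.sum_eq_zero (fun i _ => h i)] at htr1
    exact absurd htr1.symm (ne_of_gt hpos)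
  have hi₀c : t i₀ = c0 := (hall i₀).resolve_left hi₀
  have hzero : ∀ j, j ≠ i₀ → t j = 0 := by
    intro j hj
    rcases hall j with h | h
    · exact h
    · exfalso
      have : t i₀ + t j ≤ ∑ i, t i := by
        rw [show t i₀ + t j = ∑ i ∈ ({i₀, j} : Finset β), t i by
          rw [Finset.sum_pair (Ne.symm hj)]]
        exact Finset.sum_le_sum_of_subset_of_nonneg (Finset.subset_univ _)
          (fun i _ _ => htnn i)
      rw [htr1, hi₀c, h] at this
      linarith
  have hsv : ∀ i, singVals M i = if i = i₀ then Real.sqrt c0 else 0 := by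
    intro i
    unfold singVals
    by_cases h : i = i₀
    · subst h; rw [if_pos rfl]; exact congrArg Real.sqrt hi₀c
    · rw [if_neg h,
        show (Matrix.isHermitian_conjTranspose_mul_self M).eigenvalues i = (0:ℝ) from hzero i h,
        Real.sqrt_zero]
  have hσnn : 0 ≤ Real.sqrt c0 := Real.sqrt_nonneg _
  unfold kyFan
  apply le_antisymm
  · apply Finset.sup'_le
    intro s hs
    simp_rw [hsv]
    rw [Finset.sum_ite_eq' s i₀ (fun _ => Real.sqrt c0)]
    split <;> simp [hσnn]
  · have hmem : ({i₀} : Finset β) ∈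
        Finset.univ.powerset.filter (fun s : Finset β => s.card ≤ k) := by
      simp only [Finset.mem_filter, Finset.mem_powerset, Finset.subset_univ, true_and,
        Finset.card_singleton]
      exact hk
    have hle := Finset.le_sup' (fun s => ∑ i ∈ s, singVals M i) hmem
    rw [Finset.sum_singleton, hsv i₀, if_pos rfl] at hle
    exact hle

/-- (Lemma 1) For a pure fully separable four-partite state, all Ky Fan `k`-norms of the
matricization `T_{1|2|3|4}` equal `4(d-1)²/d²`. -/
theorem kyFan_T_of_pure_fully_separable (d : ℕ) (hd : 2 ≤ d)
    (lam : Fin (d ^ 2 - 1) → Matrix (Fin d) (Fin d) ℂ)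
    (hherm : ∀ i, (lam i).IsHermitian)
    (htr : ∀ i, (lam i).trace = 0)
    (horth : ∀ i j, (lam i * lam j).trace = if i = j then 2 else 0)
    (ρs : Fin 4 → Matrix (Fin d) (Fin d) ℂ)
    (hρs : ∀ f, (ρs f).PosSemidef ∧ (ρs f).trace = 1)
    (ρ : Matrix (Fin 4 → Fin d) (Fin 4 → Fin d) ℂ)
    (hprod : ∀ v w, ρ v w = ∏ j, ρs j (v j) (w j))
    (hpure : ρ * ρ = ρ)
    (k : ℕ) (hk1 : 1 ≤ k) (hk2 : k ≤ d ^ 2 - 1) :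
    kyFan k (Matrix.of fun (r : Fin (d ^ 2 - 1))
        (c : Fin (d ^ 2 - 1) × Fin (d ^ 2 - 1) × Fin (d ^ 2 - 1)) =>
        corrFull lam ρ ![r, c.1, c.2.1, c.2.2])
      = 4 * ((d : ℝ) - 1) ^ 2 / (d : ℝ) ^ 2 := by
  have hdR : (2:ℝ) ≤ d := by exact_mod_cast hd
  have hd0 : (0:ℝ) < d := by linarith
  -- the real correlation vectors
  set R : Fin 4 → Fin (d ^ 2 - 1) → ℝ := fun f i => ((ρs f * lam i).trace).re with hRdef
  have hR : ∀ f i, (ρs f * lam i).trace = ((R f i : ℝ) : ℂ) := fun f i =>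
    aux_trace_mul_real (hρs f).1.1 (hherm i)
  -- ρ as an explicit product matrix
  have hρof : ρ = Matrix.of (fun v w : Fin 4 → Fin d => ∏ j, ρs j (v j) (w j)) := by
    ext v w; exact hprod v w
  -- purity of each factor
  have htraceρs : ∀ f, (ρs f).trace = 1 := fun f => (hρs f).2
  have hprodtr : ∏ j, (ρs j * ρs j).trace = 1 := by
    have h1 : (ρ * ρ).trace = ∏ j, (ρs j * ρs j).trace := by
      rw [hρof]; exact aux_trace_prod_mul ρs ρs
    have h2 : ρ.trace = ∏ j, (ρs j).trace := by
      rw [hρof]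
      unfold Matrix.trace Matrix.diag
      simp only [Matrix.of_apply]
      exact aux_sum_pi_prod (fun j p => ρs j p p)
    rw [hpure, h2] at h1
    rw [← h1]
    exact Finset.prod_eq_one (fun j _ => htraceρs j)
  -- s f := tr(ρ_f²) as a real number
  set s : Fin 4 → ℝ := fun f => ((ρs f * ρs f).trace).re with hsdef
  have hs : ∀ f, (ρs f * ρs f).trace = ((s f : ℝ) : ℂ) := fun f =>
    aux_trace_mul_real (hρs f).1.1 (hρs f).1.1
  have hs_bounds : ∀ f, 0 ≤ s f ∧ s f ≤ 1 := by
    intro f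
    have hH : (ρs f).IsHermitian := (hρs f).1.1
    set μ : Fin d → ℝ := hH.eigenvalues with hμ
    have hμnn : ∀ i, 0 ≤ μ i := (hρs f).1.eigenvalues_nonneg
    have hsum1 : ∑ i, μ i = 1 := by
      have h := aux_trace_eq_sum_eig hH
      rw [htraceρs f, show (1:ℂ) = ((1:ℝ):ℂ) from (RCLike.ofReal_one (K := ℂ)).symm,
        ← RCLike.ofReal_sum] at h
      rw [hμ]
      exact (RCLike.ofReal_inj.mp h.symm)
    have hseq : s f = ∑ i, μ i ^ 2 := by
      have h := aux_trace_sq_eq_sum_eig_sq hH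
      rw [hs f] at h
      simp_rw [← RCLike.ofReal_pow] at h
      rw [← RCLike.ofReal_sum] at h
      rw [hμ]
      exact RCLike.ofReal_inj.mp h
    constructor
    · rw [hseq]; positivity
    · rw [hseq]
      calc ∑ i, μ i ^ 2 ≤ ∑ i, μ i := by
            apply Finset.sum_le_sum
            intro i _
            have hle : μ i ≤ 1 := by
              rw [← hsum1]
              exact Finset.single_le_sum (fun j _ => hμnn j) (Finset.mem_univ i)
            nlinarith [hμnn i]
        _ = 1 := hsum1
  have hsprod : ∏ j, s j = 1 := by
    have h : ((∏ j, s j : ℝ) : ℂ) = ∏ j, (ρs j * ρs j).trace := by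
      rw [Complex.ofReal_prod]
      exact Finset.prod_congr rfl (fun j _ => (hs j).symm)
    rw [hprodtr] at h
    exact_mod_cast h
  have hsone : ∀ f, s f = 1 := by
    intro f
    have h1 : ∏ j ∈ Finset.univ.erase f, s j ≤ 1 :=
      Finset.prod_le_one (fun j _ => (hs_bounds j).1) (fun j _ => (hs_bounds j).2)
    have h2 : s f * ∏ j ∈ Finset.univ.erase f, s j = 1 := by
      rw [Finset.mul_prod_erase Finset.univ s (Finset.mem_univ f), hsprod]
    have h3 : 1 ≤ s f := by nlinarith [(hs_bounds f).1]
    linarith [(hs_bounds f).2]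
  -- norm of each correlation vector
  have hnorm : ∀ f, ∑ i, R f i ^ 2 = 2 - 2 / d := by
    intro f
    have h := aux_trace_sq_expand lam hd htr horth (ρs f) (htraceρs f)
    rw [hs f, hsone f, Complex.ofReal_one] at h
    simp_rw [hR f] at h
    have hsum : ∑ i, ((R f i : ℝ) : ℂ)^2 / 2 = ((∑ i, R f i ^ 2 : ℝ) : ℂ) / 2 := by
      rw [← Finset.sum_div]
      norm_cast
    rw [hsum] at h
    have h2 : ((∑ i, R f i ^ 2 : ℝ) : ℂ) = ((2 - 2 / d : ℝ) : ℂ) := by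
      rw [Complex.ofReal_sub, Complex.ofReal_div, Complex.ofReal_ofNat, Complex.ofReal_natCast]
      linear_combination (-2 : ℂ) * h
    exact_mod_cast h2
  set S : ℝ := 2 - 2 / d with hSdef
  have hSpos : 0 < S := by
    rw [hSdef]
    have : 2 / (d:ℝ) ≤ 1 := by
      rw [div_le_one hd0]; exact hdR
    linarith
  -- the matricization is rank one
  have hentry : (Matrix.of fun (r : Fin (d ^ 2 - 1))
      (c : Fin (d ^ 2 - 1) × Fin (d ^ 2 - 1) × Fin (d ^ 2 - 1)) =>
      corrFull lam ρ ![r, c.1, c.2.1, c.2.2])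
      = Matrix.of fun r c => (R 0) r * ((R 1 c.1) * (R 2 c.2.1) * (R 3 c.2.2)) := by
    ext r c
    simp only [Matrix.of_apply]
    unfold corrFull
    rw [hρof, aux_trace_prod_mul ρs (fun j => lam (![r, c.1, c.2.1, c.2.2] j))]
    simp_rw [hR]
    rw [show (∏ j : Fin 4, ((R j (![r, c.1, c.2.1, c.2.2] j) : ℝ) : ℂ))
        = ((∏ j : Fin 4, R j (![r, c.1, c.2.1, c.2.2] j) : ℝ) : ℂ) by push_cast; rfl]
    rw [Complex.ofReal_re]
    rw [Fin.prod_univ_four]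
    simp only [Matrix.cons_val_zero, Matrix.cons_val_one, Matrix.head_cons,
      Matrix.cons_val_two, Matrix.tail_cons, Matrix.cons_val_three, Matrix.head_fin_const]
    ring
  rw [hentry]
  -- sums of squares
  have hX : ∑ r, (R 0) r ^ 2 = S := hnorm 0
  have hY : ∑ c : Fin (d ^ 2 - 1) × Fin (d ^ 2 - 1) × Fin (d ^ 2 - 1),
      ((R 1 c.1) * (R 2 c.2.1) * (R 3 c.2.2)) ^ 2 = S ^ 3 := by
    rw [Fintype.sum_prod_type]
    simp_rw [Fintype.sum_prod_type, mul_pow]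
    have e1 : ∀ (a : Fin (d ^ 2 - 1)) (b : Fin (d ^ 2 - 1)),
        ∑ c : Fin (d ^ 2 - 1), R 1 a ^ 2 * R 2 b ^ 2 * R 3 c ^ 2
        = R 1 a ^ 2 * R 2 b ^ 2 * S := by
      intro a b
      rw [← Finset.mul_sum, hnorm 3]
    simp_rw [e1]
    have e2 : ∀ a : Fin (d ^ 2 - 1),
        ∑ b : Fin (d ^ 2 - 1), R 1 a ^ 2 * R 2 b ^ 2 * S = R 1 a ^ 2 * S * S := by
      intro a
      rw [show (∑ b : Fin (d ^ 2 - 1), R 1 a ^ 2 * R 2 b ^ 2 * S)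
          = (∑ b : Fin (d ^ 2 - 1), R 2 b ^ 2) * (R 1 a ^ 2 * S) from by
        rw [Finset.sum_mul]
        exact Finset.sum_congr rfl (fun b _ => by ring), hnorm 2]
      ring
    simp_rw [e2]
    rw [← Finset.sum_mul, ← Finset.sum_mul, hnorm 1]
    ring
  have hpos : 0 < (∑ r, (R 0) r ^ 2) *
      (∑ c : Fin (d ^ 2 - 1) × Fin (d ^ 2 - 1) × Fin (d ^ 2 - 1),
        ((R 1 c.1) * (R 2 c.2.1) * (R 3 c.2.2)) ^ 2) := by
    rw [hX, hY]; positivity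
  rw [aux_kyFan_rank_one _ _ k hk1 hpos, hX, hY]
  rw [show S * S ^ 3 = (S ^ 2) ^ 2 by ring, Real.sqrt_sq (by positivity)]
  rw [hSdef]
  field_simp
  ring
end

section
/- (Lemma 3(i)) Let f,g,h,l be a permutation of 1,2,3,4 and let ρ be a pure density matrix on (ℂ^d)^{⊗4} that is separable under the bipartition fgh|l, i.e. ρ = ρ_{fgh} ⊗ ρ_l (up to the corresponding permutation of tensor factors) with ρ_{fgh} a density matrix on (ℂ^d)^{⊗3} and ρ_l a density matrix on ℂ^d. Then for every k = 1,…,d²−1, ‖T_{fgh|l}‖_k ≤ 4(d−1)√(d²+d+1)/d². -/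
open Matrix ComplexOrder

/-- Separability of an `n`-partite state (indexed by `Fin n → Fin d`) under the
bipartition `A | Aᶜ`: `ρ` is, up to the permutation of tensor factors, the tensor
product of a density matrix on the factors in `A` and one on the factors not in `A`. -/
def SepUnder {n d : ℕ} (ρ : Matrix (Fin n → Fin d) (Fin n → Fin d) ℂ)
    (A : Finset (Fin n)) : Prop :=
  ∃ (ρA : Matrix ({j // j ∈ A} → Fin d) ({j // j ∈ A} → Fin d) ℂ)
    (ρB : Matrix ({j // j ∉ A} → Fin d) ({j // j ∉ A} → Fin d) ℂ),
    ρA.PosSemidef ∧ ρA.trace = 1 ∧ ρB.PosSemidef ∧ ρB.trace = 1 ∧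
    ∀ v w, ρ v w = ρA (fun j => v j.1) (fun j => w j.1) * ρB (fun j => v j.1) (fun j => w j.1)

/-- The matricization `T_{fgh|l}` of the 4-body correlation tensor: rows indexed by
`(i_f, i_g, i_h)`, columns by `i_l`. -/
noncomputable def T3v1 {d : ℕ} (lam : Fin (d ^ 2 - 1) → Matrix (Fin d) (Fin d) ℂ)
    (ρ : Matrix (Fin 4 → Fin d) (Fin 4 → Fin d) ℂ) (f g h l : Fin 4) :
    Matrix (Fin (d ^ 2 - 1) × Fin (d ^ 2 - 1) × Fin (d ^ 2 - 1)) (Fin (d ^ 2 - 1)) ℝ :=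
  Matrix.of fun r c => corrFull lam ρ
    (fun j => if j = f then r.1 else if j = g then r.2.1 else if j = h then r.2.2 else c)

namespace L3aux

/-- trace = sum of eigenvalues, for Hermitian matrices over an RCLike field. -/
lemma sum_eigs {𝕜 : Type*} [RCLike 𝕜] {n : Type*} [Fintype n] [DecidableEq n]
    {N : Matrix n n 𝕜} (hN : N.IsHermitian) :
    ∑ i, (hN.eigenvalues i : 𝕜) = N.trace := by
  have hVV : star (hN.eigenvectorUnitary : Matrix n n 𝕜) * hN.eigenvectorUnitary = 1 :=
    (Matrix.mem_unitaryGroup_iff').mp (hN.eigenvectorUnitary).2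
  conv_rhs => rw [hN.spectral_theorem]
  simp only [Unitary.conjStarAlgAut_apply, Unitary.coe_star]
  rw [Matrix.trace_mul_cycle, hVV, Matrix.one_mul, Matrix.trace_diagonal]
  rfl

lemma trace_mul_self_eq {𝕜 : Type*} [RCLike 𝕜] {n : Type*} [Fintype n] [DecidableEq n]
    {N : Matrix n n 𝕜} (hN : N.IsHermitian) :
    (N * N).trace = ∑ i, (hN.eigenvalues i : 𝕜) ^ 2 := by
  set V : Matrix n n 𝕜 := (hN.eigenvectorUnitary : Matrix n n 𝕜) with hV
  set D : Matrix n n 𝕜 := diagonal (RCLike.ofReal ∘ hN.eigenvalues) with hD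
  have hVV : star V * V = 1 := (Matrix.mem_unitaryGroup_iff').mp (hN.eigenvectorUnitary).2
  have key : N * N = V * (D * (D * star V)) := by
    conv_lhs => rw [hN.spectral_theorem]
    simp only [Unitary.conjStarAlgAut_apply, Unitary.coe_star]
    rw [← hV, ← hD]
    simp only [Matrix.mul_assoc]
    congr 1
    congr 1
    rw [← Matrix.mul_assoc, hVV, Matrix.one_mul]
  rw [key, Matrix.trace_mul_comm]
  simp only [Matrix.mul_assoc]
  rw [hVV, Matrix.mul_one, Matrix.diagonal_mul_diagonal, Matrix.trace_diagonal]
  simp [sq]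

/-- For a PSD matrix with trace 1, the trace of its square is at most 1 (real part). -/
lemma trace_sq_le {n : Type*} [Fintype n] [DecidableEq n]
    {σ : Matrix n n ℂ} (hσ : σ.PosSemidef) (h1 : σ.trace = 1) :
    ((σ * σ).trace).re ≤ 1 := by
  have hH := hσ.1
  have hnn : ∀ i, 0 ≤ hH.eigenvalues i := fun i => hσ.eigenvalues_nonneg i
  have hsum : ∑ i, hH.eigenvalues i = 1 := by
    have := sum_eigs hH
    rw [h1] at this
    have := congrArg Complex.re this
    simpa using this
  have hle1 : ∀ i, hH.eigenvalues i ≤ 1 := by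
    intro i
    rw [← hsum]
    exact Finset.single_le_sum (fun j _ => hnn j) (Finset.mem_univ i)
  rw [trace_mul_self_eq hH]
  have : (∑ i, ((RCLike.ofReal (hH.eigenvalues i) : ℂ)) ^ 2).re = ∑ i, (hH.eigenvalues i) ^ 2 := by
    rw [Complex.re_sum]
    congr 1; funext i
    simp [← Complex.ofReal_pow]
  rw [this, ← hsum]
  exact Finset.sum_le_sum fun i _ => by nlinarith [hnn i, hle1 i]


variable {d : ℕ}

/-- The tensor product `lam (b j₁) ⊗ lam (b j₂) ⊗ ⋯` as a matrix on `ι → Fin d`. -/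
noncomputable def SMat (lam : Fin (d ^ 2 - 1) → Matrix (Fin d) (Fin d) ℂ) {ι : Type*} [Fintype ι]
    (b : ι → Fin (d ^ 2 - 1)) : Matrix (ι → Fin d) (ι → Fin d) ℂ :=
  Matrix.of fun v w => ∏ j, lam (b j) (v j) (w j)

lemma SMat_trace (lam : Fin (d ^ 2 - 1) → Matrix (Fin d) (Fin d) ℂ) {ι : Type*} [Fintype ι]
    [DecidableEq ι] (b : ι → Fin (d ^ 2 - 1)) :
    (SMat lam b).trace = ∏ j, (lam (b j)).trace := by
  simp only [Matrix.trace, Matrix.diag, SMat, Matrix.of_apply]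
  exact (Fintype.prod_sum fun j x => lam (b j) x x).symm

lemma SMat_mul_trace (lam : Fin (d ^ 2 - 1) → Matrix (Fin d) (Fin d) ℂ) {ι : Type*} [Fintype ι]
    [DecidableEq ι] (b b' : ι → Fin (d ^ 2 - 1)) :
    (SMat lam b * SMat lam b').trace = ∏ j, (lam (b j) * lam (b' j)).trace := by
  have h1 : ∀ j, (lam (b j) * lam (b' j)).trace = ∑ y, ∑ x, lam (b j) y x * lam (b' j) x y := by
    intro j; simp [Matrix.trace, Matrix.diag, Matrix.mul_apply]
  simp only [h1]
  simp only [Matrix.trace, Matrix.diag, Matrix.mul_apply, SMat, Matrix.of_apply,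
    ← Finset.prod_mul_distrib]
  calc ∑ v : ι → Fin d, ∑ w : ι → Fin d, ∏ j, lam (b j) (v j) (w j) * lam (b' j) (w j) (v j)
      = ∑ v : ι → Fin d, ∏ j, ∑ x, lam (b j) (v j) x * lam (b' j) x (v j) :=
        Finset.sum_congr rfl fun v _ =>
          (Fintype.prod_sum fun j x => lam (b j) (v j) x * lam (b' j) x (v j)).symm
    _ = ∏ j, ∑ y, ∑ x, lam (b j) y x * lam (b' j) x y :=
        (Fintype.prod_sum fun j y => ∑ x, lam (b j) y x * lam (b' j) x y).symm

lemma SMat_conjTranspose (lam : Fin (d ^ 2 - 1) → Matrix (Fin d) (Fin d) ℂ)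
    (hherm : ∀ i, (lam i).IsHermitian) {ι : Type*} [Fintype ι]
    (b : ι → Fin (d ^ 2 - 1)) : (SMat lam b).IsHermitian := by
  show (SMat lam b)ᴴ = SMat lam b
  ext v w
  simp only [Matrix.conjTranspose_apply, SMat, Matrix.of_apply]
  rw [star_prod]
  exact Finset.prod_congr rfl fun j _ => by
    rw [← Matrix.conjTranspose_apply, (hherm (b j)).eq]


lemma trace_mul_real {n : Type*} [Fintype n] {A B : Matrix n n ℂ}
    (hA : A.IsHermitian) (hB : B.IsHermitian) :
    (((A * B).trace.re : ℝ) : ℂ) = (A * B).trace := by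
  have h : (starRingEnd ℂ) ((A * B).trace) = (A * B).trace := by
    have : (starRingEnd ℂ) ((A * B).trace) = star ((A * B).trace) := rfl
    rw [this, ← Matrix.trace_conjTranspose, Matrix.conjTranspose_mul, hA.eq, hB.eq,
      Matrix.trace_mul_comm]
  exact Complex.conj_eq_iff_re.mp h

lemma bessel {ι : Type*} [Fintype ι] [DecidableEq ι] [Nonempty ι] {d : ℕ} (hd : 0 < d)
    (lam : Fin (d ^ 2 - 1) → Matrix (Fin d) (Fin d) ℂ)
    (hherm : ∀ i, (lam i).IsHermitian)
    (htr : ∀ i, (lam i).trace = 0)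
    (horth : ∀ i j, (lam i * lam j).trace = if i = j then 2 else 0)
    (σ : Matrix (ι → Fin d) (ι → Fin d) ℂ) (hpsd : σ.PosSemidef) (htrσ : σ.trace = 1) :
    ∑ b : ι → Fin (d ^ 2 - 1), ((σ * SMat lam b).trace.re) ^ 2
      ≤ 2 ^ (Fintype.card ι) * (1 - (1 / (d : ℝ)) ^ (Fintype.card ι)) := by
  classical
  set m := Fintype.card ι with hm
  set c : (ι → Fin (d ^ 2 - 1)) → ℝ := fun b => (σ * SMat lam b).trace.re with hcdef
  have hcreal : ∀ b, ((c b : ℝ) : ℂ) = (σ * SMat lam b).trace := fun b =>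
    trace_mul_real hpsd.1 (SMat_conjTranspose lam hherm b)
  have hS0 : ∀ b : ι → Fin (d ^ 2 - 1), (SMat lam b).trace = 0 := by
    intro b
    rw [SMat_trace]
    exact Finset.prod_eq_zero (Finset.mem_univ (Classical.arbitrary ι)) (htr _)
  have hSS : ∀ b b' : ι → Fin (d ^ 2 - 1),
      (SMat lam b * SMat lam b').trace = if b = b' then ((2 : ℂ) ^ m) else 0 := by
    intro b b'
    rw [SMat_mul_trace]
    by_cases hbb : b = b'
    · subst hbb
      simp [horth, hm, Finset.prod_const, Finset.card_univ]
    · obtain ⟨j, hj⟩ := Function.ne_iff.mp hbb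
      rw [if_neg hbb]
      refine Finset.prod_eq_zero (Finset.mem_univ j) ?_
      rw [horth, if_neg hj]
  set α : ℂ := ((((d : ℝ) ^ m)⁻¹ : ℝ) : ℂ) with hα
  set β : (ι → Fin (d ^ 2 - 1)) → ℂ := fun b => ((c b / 2 ^ m : ℝ) : ℂ) with hβ
  set P : Matrix (ι → Fin d) (ι → Fin d) ℂ := α • 1 + ∑ b, β b • SMat lam b with hP
  have hd0 : ((d : ℝ) ^ m) ≠ 0 := by positivity
  have htr1 : (1 : Matrix (ι → Fin d) (ι → Fin d) ℂ).trace = (((d : ℝ) ^ m : ℝ) : ℂ) := by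
    rw [Matrix.trace_one]
    push_cast
    rw [Fintype.card_fun]
    push_cast
    simp [hm]
  have hσP : (σ * P).trace = α + ∑ b, β b * (c b : ℂ) := by
    rw [hP, Matrix.mul_add, Matrix.trace_add, Matrix.mul_smul, Matrix.mul_one, Matrix.trace_smul,
      htrσ, smul_eq_mul, mul_one, Matrix.mul_sum, Matrix.trace_sum]
    congr 1
    refine Finset.sum_congr rfl fun b _ => ?_
    rw [Matrix.mul_smul, Matrix.trace_smul, smul_eq_mul, ← hcreal b]
  have hPσ : (P * σ).trace = α + ∑ b, β b * (c b : ℂ) := by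
    rw [Matrix.trace_mul_comm]; exact hσP
  have hPP : (P * P).trace = α * α * (((d : ℝ) ^ m : ℝ) : ℂ) + ∑ b, β b * β b * (2 : ℂ) ^ m := by
    rw [hP, Matrix.add_mul, Matrix.mul_add, Matrix.mul_add, Matrix.trace_add, Matrix.trace_add,
      Matrix.trace_add]
    have e1 : ((α • (1 : Matrix (ι → Fin d) (ι → Fin d) ℂ)) * (α • 1)).trace
        = α * α * (((d : ℝ) ^ m : ℝ) : ℂ) := by
      rw [Matrix.smul_mul, Matrix.mul_smul, Matrix.one_mul, Matrix.trace_smul, Matrix.trace_smul,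
        htr1, smul_eq_mul, smul_eq_mul]
      ring
    have e2 : ((α • (1 : Matrix (ι → Fin d) (ι → Fin d) ℂ)) * ∑ b, β b • SMat lam b).trace = 0 := by
      rw [Matrix.mul_sum, Matrix.trace_sum]
      refine Finset.sum_eq_zero fun b _ => ?_
      rw [Matrix.smul_mul, Matrix.one_mul, Matrix.trace_smul, Matrix.trace_smul, hS0 b]
      simp
    have e3 : ((∑ b, β b • SMat lam b) * (α • (1 : Matrix (ι → Fin d) (ι → Fin d) ℂ))).trace
        = 0 := by
      rw [Matrix.sum_mul, Matrix.trace_sum]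
      refine Finset.sum_eq_zero fun b _ => ?_
      rw [Matrix.mul_smul, Matrix.mul_one, Matrix.trace_smul, Matrix.trace_smul, hS0 b]
      simp
    have e4 : ((∑ b, β b • SMat lam b) * (∑ b, β b • SMat lam b)).trace
        = ∑ b, β b * β b * (2 : ℂ) ^ m := by
      rw [Matrix.sum_mul, Matrix.trace_sum]
      refine Finset.sum_congr rfl fun b _ => ?_
      rw [Matrix.mul_sum, Matrix.trace_sum]
      have : ∀ b', ((β b • SMat lam b) * (β b' • SMat lam b')).trace
          = β b * β b' * (if b = b' then ((2 : ℂ) ^ m) else 0) := by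
        intro b'
        rw [Matrix.smul_mul, Matrix.mul_smul, Matrix.trace_smul, Matrix.trace_smul, hSS b b']
        simp [smul_eq_mul]; ring
      simp only [this]
      rw [Finset.sum_eq_single b (fun b' _ hne => by rw [if_neg (fun hh => hne hh.symm), mul_zero])
        (fun hb => absurd (Finset.mem_univ b) hb)]
      rw [if_pos rfl]
    rw [e1, e2, e3, e4]
    ring
  -- Hermiticity of P and X
  have hβstar : ∀ b, star (β b) = β b := fun b => by
    simp [hβ, Complex.star_def, Complex.conj_ofReal]
  have hPh : P.IsHermitian := by
    rw [hP]
    apply Matrix.IsHermitian.add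
    · show (α • (1 : Matrix (ι → Fin d) (ι → Fin d) ℂ))ᴴ = _
      rw [Matrix.conjTranspose_smul, Matrix.isHermitian_one.eq, hα, Complex.star_def,
        Complex.conj_ofReal]
    · show (∑ b, β b • SMat lam b)ᴴ = _
      rw [Matrix.conjTranspose_sum]
      refine Finset.sum_congr rfl fun b _ => ?_
      rw [Matrix.conjTranspose_smul, (SMat_conjTranspose lam hherm b).eq, hβstar b]
  have hXh : (σ - P).IsHermitian := hpsd.1.sub hPh
  -- nonnegativity of trace ((σ - P) * (σ - P))
  have h0 : 0 ≤ (((σ - P) * (σ - P)).trace).re := by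
    have key : (σ - P) * (σ - P) = (σ - P)ᴴ * (σ - P) := by rw [hXh.eq]
    rw [key]
    have hexp : ((σ - P)ᴴ * (σ - P)).trace
        = ∑ v, ∑ w, (starRingEnd ℂ) ((σ - P) w v) * ((σ - P) w v) := by
      simp [Matrix.trace, Matrix.diag, Matrix.mul_apply, Matrix.conjTranspose_apply,
        Complex.star_def]
    rw [hexp, Complex.re_sum]
    refine Finset.sum_nonneg fun v _ => ?_
    rw [Complex.re_sum]
    refine Finset.sum_nonneg fun w _ => ?_
    rw [mul_comm, Complex.mul_conj]
    simp [Complex.normSq_nonneg]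
  -- the value of trace ((σ - P) * (σ - P))
  have hs1 : ∀ b, β b * (c b : ℂ) = (((c b) ^ 2 / 2 ^ m : ℝ) : ℂ) := fun b => by
    simp only [hβ]
    push_cast
    ring
  have hs2 : ∀ b, β b * β b * (2 : ℂ) ^ m = (((c b) ^ 2 / 2 ^ m : ℝ) : ℂ) := fun b => by
    simp only [hβ]
    push_cast
    field_simp
  have hαdm : α * α * (((d : ℝ) ^ m : ℝ) : ℂ) = α := by
    rw [hα]
    push_cast
    field_simp
  have hval : (((σ - P)) * (σ - P)).trace
      = (σ * σ).trace - ((((d : ℝ) ^ m)⁻¹ : ℝ) : ℂ)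
        - ((∑ b, (c b) ^ 2 / 2 ^ m : ℝ) : ℂ) := by
    rw [Matrix.sub_mul, Matrix.mul_sub, Matrix.mul_sub, Matrix.trace_sub, Matrix.trace_sub,
      Matrix.trace_sub, hσP, hPσ, hPP]
    simp only [hs1, hs2, ← Complex.ofReal_sum]
    rw [hαdm, hα]
    ring
  rw [hval] at h0
  have h1 : ((σ * σ).trace).re ≤ 1 := trace_sq_le hpsd htrσ
  simp only [Complex.sub_re, Complex.ofReal_re] at h0
  have h2m : (0 : ℝ) < 2 ^ m := by positivity
  have hkey : (∑ b, (c b) ^ 2 / 2 ^ m : ℝ) ≤ 1 - ((d : ℝ) ^ m)⁻¹ := by linarith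
  rw [← Finset.sum_div] at hkey
  have hfold : ∑ b : ι → Fin (d ^ 2 - 1), ((σ * SMat lam b).trace.re) ^ 2
      = ∑ b : ι → Fin (d ^ 2 - 1), c b ^ 2 :=
    Finset.sum_congr rfl fun b _ => by rw [hcdef]
  rw [hfold, one_div, inv_pow]
  have h2 := (div_le_iff₀ h2m).mp hkey
  linarith


set_option maxHeartbeats 2000000 in
lemma trace_factor {n d : ℕ} (lam : Fin (d ^ 2 - 1) → Matrix (Fin d) (Fin d) ℂ)
    (A : Finset (Fin n))
    (ρA : Matrix ({j // j ∈ A} → Fin d) ({j // j ∈ A} → Fin d) ℂ)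
    (ρB : Matrix ({j // j ∉ A} → Fin d) ({j // j ∉ A} → Fin d) ℂ)
    (ρ : Matrix (Fin n → Fin d) (Fin n → Fin d) ℂ)
    (hfact : ∀ v w, ρ v w
      = ρA (fun j => v j.1) (fun j => w j.1) * ρB (fun j => v j.1) (fun j => w j.1))
    (a : Fin n → Fin (d ^ 2 - 1)) :
    (ρ * Matrix.of (fun v w : Fin n → Fin d => ∏ j, lam (a j) (v j) (w j))).trace
      = (ρA * SMat lam (fun j : {j // j ∈ A} => a j.1)).trace
        * (ρB * SMat lam (fun j : {j // j ∉ A} => a j.1)).trace := by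
  set f1 : ({j // j ∈ A} → Fin d) → ({j // j ∈ A} → Fin d) → ℂ :=
    fun x y => ρA x y * ∏ j, lam (a j.1) (y j) (x j) with hf1
  set f2 : ({j // j ∉ A} → Fin d) → ({j // j ∉ A} → Fin d) → ℂ :=
    fun x y => ρB x y * ∏ j, lam (a j.1) (y j) (x j) with hf2
  have hL : (ρ * Matrix.of (fun v w : Fin n → Fin d => ∏ j, lam (a j) (v j) (w j))).trace
      = ∑ v : Fin n → Fin d, ∑ w : Fin n → Fin d,
          f1 (fun j => v j.1) (fun j => w j.1) * f2 (fun j => v j.1) (fun j => w j.1) := by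
    simp only [Matrix.trace, Matrix.diag, Matrix.mul_apply, Matrix.of_apply]
    have hsplit : ∀ F : Fin n → ℂ,
        (∏ j : {j // j ∈ A}, F j.1) * (∏ j : {j // j ∉ A}, F j.1) = ∏ j, F j := by
      intro F
      have h := Fintype.prod_subtype_mul_prod_subtype (fun j : Fin n => j ∈ A) F
      convert h using 4 <;> first | rfl | exact Subsingleton.elim _ _
    refine Finset.sum_congr rfl fun v _ => Finset.sum_congr rfl fun w _ => ?_
    rw [hfact v w, ← hsplit (fun j => lam (a j) (w j) (v j))]
    simp only [hf1, hf2]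
    ring
  have hR1 : (ρA * SMat lam (fun j : {j // j ∈ A} => a j.1)).trace = ∑ x, ∑ y, f1 x y := by
    simp only [Matrix.trace, Matrix.diag, Matrix.mul_apply, SMat, Matrix.of_apply, hf1]
  have hR2 : (ρB * SMat lam (fun j : {j // j ∉ A} => a j.1)).trace = ∑ x, ∑ y, f2 x y := by
    simp only [Matrix.trace, Matrix.diag, Matrix.mul_apply, SMat, Matrix.of_apply, hf2]
  rw [hL, hR1, hR2]
  set e := Equiv.piEquivPiSubtypeProd (· ∈ A) (fun _ : Fin n => Fin d) with he
  have hres1 : ∀ q : ({j // j ∈ A} → Fin d) × ({j // j ∉ A} → Fin d),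
      (fun j : {j // j ∈ A} => e.symm q j.1) = q.1 := by
    intro q; funext j
    simp [he, Equiv.piEquivPiSubtypeProd, j.2]
  have hres2 : ∀ q : ({j // j ∈ A} → Fin d) × ({j // j ∉ A} → Fin d),
      (fun j : {j // j ∉ A} => e.symm q j.1) = q.2 := by
    intro q; funext j
    simp [he, Equiv.piEquivPiSubtypeProd, j.2]
  calc ∑ v : Fin n → Fin d, ∑ w : Fin n → Fin d,
          f1 (fun j => v j.1) (fun j => w j.1) * f2 (fun j => v j.1) (fun j => w j.1)
      = ∑ q : ({j // j ∈ A} → Fin d) × ({j // j ∉ A} → Fin d),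
          ∑ p : ({j // j ∈ A} → Fin d) × ({j // j ∉ A} → Fin d),
          f1 q.1 p.1 * f2 q.2 p.2 := by
        rw [← Equiv.sum_comp e.symm (fun v => ∑ w : Fin n → Fin d,
          f1 (fun j => v j.1) (fun j => w j.1) * f2 (fun j => v j.1) (fun j => w j.1))]
        refine Finset.sum_congr rfl fun q _ => ?_
        rw [← Equiv.sum_comp e.symm (fun w => f1 (fun j => e.symm q j.1) (fun j => w j.1)
          * f2 (fun j => e.symm q j.1) (fun j => w j.1))]
        refine Finset.sum_congr rfl fun p _ => ?_
        rw [hres1 q, hres1 p, hres2 q, hres2 p]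
    _ = (∑ x, ∑ y, f1 x y) * (∑ x, ∑ y, f2 x y) := by
        simp only [Fintype.sum_prod_type]
        rw [Finset.sum_mul_sum]
        refine Finset.sum_congr rfl fun x _ => ?_
        refine Finset.sum_congr rfl fun x' _ => ?_
        rw [Finset.sum_mul_sum]



lemma sum_eigs_real {n : Type*} [Fintype n] [DecidableEq n] {N : Matrix n n ℝ}
    (hN : N.IsHermitian) : ∑ i, hN.eigenvalues i = N.trace := by
  have := sum_eigs hN
  simpa using this

lemma kyFan_vecMulVec_le {ma nb : Type*} [Fintype ma] [Fintype nb] [DecidableEq nb]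
    (u : ma → ℝ) (v : nb → ℝ) (k : ℕ) :
    kyFan k (Matrix.vecMulVec u v) ≤ Real.sqrt ((∑ i, u i ^ 2) * (∑ j, v j ^ 2)) := by
  classical
  set M := Matrix.vecMulVec u v with hM
  have hN := Matrix.isHermitian_conjTranspose_mul_self M
  have hpsd : (Mᴴ * M).PosSemidef := Matrix.posSemidef_conjTranspose_mul_self M
  have hnn : ∀ i, 0 ≤ hN.eigenvalues i := fun i => hpsd.eigenvalues_nonneg i
  have htrace : ∑ i, hN.eigenvalues i = (∑ i, u i ^ 2) * (∑ j, v j ^ 2) := by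
    rw [sum_eigs_real hN]
    have h1 : (Mᴴ * M).trace = ∑ j, ∑ i, (u i * v j) * (u i * v j) := by
      simp [Matrix.trace, Matrix.diag, Matrix.mul_apply, Matrix.conjTranspose_apply,
        Matrix.vecMulVec_apply, hM]
      exact Finset.sum_congr rfl fun j _ => Finset.sum_congr rfl fun i _ => by ring
    rw [h1, Finset.sum_mul_sum, Finset.sum_comm]
    refine Finset.sum_congr rfl fun j _ => Finset.sum_congr rfl fun i _ => by ring
  have hrank : Fintype.card {i // hN.eigenvalues i ≠ 0} ≤ 1 := by
    rw [← hN.rank_eq_card_non_zero_eigs]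
    calc (Mᴴ * M).rank ≤ M.rank := Matrix.rank_mul_le_right _ _
      _ ≤ 1 := by
        rw [hM, Matrix.vecMulVec_eq Unit u v]
        exact le_trans (Matrix.rank_mul_le_left _ _)
          (le_trans (Matrix.rank_le_card_width _) (by simp))
  have hsub : ∀ i j, hN.eigenvalues i ≠ 0 → hN.eigenvalues j ≠ 0 → i = j := by
    intro i j hi hj
    have := Fintype.card_le_one_iff.mp hrank ⟨i, hi⟩ ⟨j, hj⟩
    exact congrArg Subtype.val this
  have hbound : ∀ s : Finset nb, ∑ i ∈ s, singVals M i
      ≤ Real.sqrt ((∑ i, u i ^ 2) * (∑ j, v j ^ 2)) := by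
    intro s
    by_cases hex : ∃ i, hN.eigenvalues i ≠ 0
    · obtain ⟨i0, hi0⟩ := hex
      have hz : ∀ j, j ≠ i0 → singVals M j = 0 := by
        intro j hj
        have hzero : hN.eigenvalues j = 0 := by
          by_contra hcon
          exact hj (hsub j i0 hcon hi0)
        show Real.sqrt ((Matrix.isHermitian_conjTranspose_mul_self M).eigenvalues j) = 0
        rw [show (Matrix.isHermitian_conjTranspose_mul_self M).eigenvalues j
            = hN.eigenvalues j from rfl, hzero, Real.sqrt_zero]
      calc ∑ i ∈ s, singVals M i ≤ ∑ i : nb, singVals M i :=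
            Finset.sum_le_sum_of_subset_of_nonneg (Finset.subset_univ s)
              (fun j _ _ => Real.sqrt_nonneg _)
        _ = singVals M i0 := Finset.sum_eq_single i0 (fun j _ hj => hz j hj)
              (fun h => absurd (Finset.mem_univ i0) h)
        _ ≤ Real.sqrt (∑ i, hN.eigenvalues i) :=
              Real.sqrt_le_sqrt (Finset.single_le_sum (fun j _ => hnn j) (Finset.mem_univ i0))
        _ = _ := by rw [htrace]
    · push_neg at hex
      have : ∀ i ∈ s, singVals M i = 0 := by
        intro i _
        show Real.sqrt ((Matrix.isHermitian_conjTranspose_mul_self M).eigenvalues i) = 0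
        rw [show (Matrix.isHermitian_conjTranspose_mul_self M).eigenvalues i
            = hN.eigenvalues i from rfl, hex i, Real.sqrt_zero]
      rw [Finset.sum_eq_zero this]
      exact Real.sqrt_nonneg _
  exact Finset.sup'_le _ _ fun s _ => hbound s



lemma sum_sq_le_of_inj {γ δ : Type*} [Fintype γ] [Fintype δ] [DecidableEq δ] (F : δ → ℝ)
    (i : γ → δ) (hi : Function.Injective i) :
    ∑ x, (F (i x)) ^ 2 ≤ ∑ b, (F b) ^ 2 := by
  have himg := Finset.sum_image (s := Finset.univ) (g := i) (f := fun b => F b ^ 2)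
    (fun x _ y _ hxy => hi hxy)
  rw [← himg]
  exact Finset.sum_le_sum_of_subset_of_nonneg (Finset.subset_univ _)
    (fun _ _ _ => sq_nonneg _)


end L3aux

set_option maxHeartbeats 1000000 in
/-- (Lemma 3(i)) If a pure four-partite state is separable under the bipartition `fgh|l`,
then `‖T_{fgh|l}‖_k ≤ 4(d-1)√(d²+d+1)/d²` for every `k = 1, …, d²-1`. -/
theorem kyFan_T3v1_of_sep (d : ℕ) (hd : 2 ≤ d)
    (lam : Fin (d ^ 2 - 1) → Matrix (Fin d) (Fin d) ℂ)
    (hherm : ∀ i, (lam i).IsHermitian)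
    (htr : ∀ i, (lam i).trace = 0)
    (horth : ∀ i j, (lam i * lam j).trace = if i = j then 2 else 0)
    (f g h l : Fin 4) (hperm : ({f, g, h, l} : Finset (Fin 4)) = Finset.univ)
    (ρ : Matrix (Fin 4 → Fin d) (Fin 4 → Fin d) ℂ)
    (hpsd : ρ.PosSemidef) (htrρ : ρ.trace = 1) (hpure : ρ * ρ = ρ)
    (hsep : SepUnder ρ {f, g, h})
    (k : ℕ) (hk1 : 1 ≤ k) (hk2 : k ≤ d ^ 2 - 1) :
    kyFan k (T3v1 lam ρ f g h l)
      ≤ 4 * ((d : ℝ) - 1) * Real.sqrt ((d : ℝ) ^ 2 + d + 1) / (d : ℝ) ^ 2 := by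
  classical
  obtain ⟨ρA, ρB, hApsd, hAtr, hBpsd, hBtr, hfact⟩ := hsep
  -- distinctness
  have hcard4 : ({f, g, h, l} : Finset (Fin 4)).card = 4 := by
    rw [hperm, Finset.card_univ, Fintype.card_fin]
  have h3 : ∀ x y z : Fin 4, ({x, y, z} : Finset (Fin 4)).card ≤ 3 := by
    intro x y z
    refine le_trans (Finset.card_insert_le _ _) (Nat.succ_le_succ ?_)
    refine le_trans (Finset.card_insert_le _ _) (Nat.succ_le_succ ?_)
    simp
  have hf' : f ∉ ({g, h, l} : Finset (Fin 4)) := by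
    intro hf
    simp only [Finset.mem_insert, Finset.mem_singleton] at hf
    have heq : ({f, g, h, l} : Finset (Fin 4)) = {g, h, l} := by
      rcases hf with hf | hf | hf <;> subst hf <;> (ext x; simp only [Finset.mem_insert, Finset.mem_singleton]; tauto)
    rw [heq] at hcard4
    have := h3 g h l
    omega
  have hg' : g ∉ ({h, l} : Finset (Fin 4)) := by
    intro hg
    simp only [Finset.mem_insert, Finset.mem_singleton] at hg
    have heq : ({f, g, h, l} : Finset (Fin 4)) = {f, h, l} := by
      rcases hg with hg | hg <;> subst hg <;> (ext x; simp only [Finset.mem_insert, Finset.mem_singleton]; tauto)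
    rw [heq] at hcard4
    have := h3 f h l
    omega
  have hh' : h ≠ l := by
    intro hh
    subst hh
    have heq : ({f, g, h, h} : Finset (Fin 4)) = {f, g, h} := by
      ext x; simp only [Finset.mem_insert, Finset.mem_singleton]; tauto
    rw [heq] at hcard4
    have := h3 f g h
    omega
  simp only [Finset.mem_insert, Finset.mem_singleton, not_or] at hf' hg'
  obtain ⟨hfg, hfh, hfl⟩ := hf'
  obtain ⟨hgh, hgl⟩ := hg'
  have hlA : l ∉ ({f, g, h} : Finset (Fin 4)) := by
    simp only [Finset.mem_insert, Finset.mem_singleton, not_or]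
    exact ⟨fun hx => hfl hx.symm, fun hx => hgl hx.symm, fun hx => hh' hx.symm⟩
  haveI hne1 : Nonempty {j // j ∈ ({f, g, h} : Finset (Fin 4))} := ⟨⟨f, by simp⟩⟩
  haveI hne2 : Nonempty {j // j ∉ ({f, g, h} : Finset (Fin 4))} := ⟨⟨l, hlA⟩⟩
  have hd0 : 0 < d := by omega
  -- the rank-one decomposition
  set u : Fin (d ^ 2 - 1) × Fin (d ^ 2 - 1) × Fin (d ^ 2 - 1) → ℝ := fun r =>
    ((ρA * L3aux.SMat lam (fun j : {j // j ∈ ({f, g, h} : Finset (Fin 4))} =>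
        if j.1 = f then r.1 else if j.1 = g then r.2.1 else r.2.2)).trace).re with hu
  set v : Fin (d ^ 2 - 1) → ℝ := fun c₀ =>
    ((ρB * L3aux.SMat lam
        (fun _ : {j // j ∉ ({f, g, h} : Finset (Fin 4))} => c₀)).trace).re with hv
  have hT : T3v1 lam ρ f g h l = Matrix.vecMulVec u v := by
    ext r c₀
    simp only [T3v1, corrFull, Matrix.of_apply, Matrix.vecMulVec_apply]
    have hfac := L3aux.trace_factor lam {f, g, h} ρA ρB ρ hfact
      (fun j => if j = f then r.1 else if j = g then r.2.1 else if j = h then r.2.2 else c₀)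
    beta_reduce at hfac
    have ha1 : (fun j : {j // j ∈ ({f, g, h} : Finset (Fin 4))} =>
        if j.1 = f then r.1 else if j.1 = g then r.2.1 else if j.1 = h then r.2.2 else c₀)
        = (fun j : {j // j ∈ ({f, g, h} : Finset (Fin 4))} =>
        if j.1 = f then r.1 else if j.1 = g then r.2.1 else r.2.2) := by
      funext j
      have hj := j.2
      simp only [Finset.mem_insert, Finset.mem_singleton] at hj
      rcases hj with hj | hj | hj
      · simp [hj]
      · by_cases hjf : j.1 = f
        · simp [hjf]
        · simp [hj, hjf]
      · by_cases hjf : j.1 = f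
        · simp [hjf]
        · by_cases hjg : j.1 = g
          · simp [hjg, hjf]
          · simp [hj, hjf, hjg]
    have ha2 : (fun j : {j // j ∉ ({f, g, h} : Finset (Fin 4))} =>
        if j.1 = f then r.1 else if j.1 = g then r.2.1 else if j.1 = h then r.2.2 else c₀)
        = (fun _ : {j // j ∉ ({f, g, h} : Finset (Fin 4))} => c₀) := by
      funext j
      have hj := j.2
      simp only [Finset.mem_insert, Finset.mem_singleton, not_or] at hj
      simp [hj.1, hj.2.1, hj.2.2]
    rw [ha1, ha2] at hfac
    rw [hfac, ← L3aux.trace_mul_real hApsd.1 (L3aux.SMat_conjTranspose lam hherm _),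
      ← L3aux.trace_mul_real hBpsd.1 (L3aux.SMat_conjTranspose lam hherm _),
      ← Complex.ofReal_mul, Complex.ofReal_re]
  -- cardinalities
  have hcardA3 : ({f, g, h} : Finset (Fin 4)).card = 3 := by
    rw [Finset.card_insert_of_notMem (by simp [hfg, hfh]),
      Finset.card_insert_of_notMem (by simp [hgh]), Finset.card_singleton]
  have hcardA : Fintype.card {j // j ∈ ({f, g, h} : Finset (Fin 4))} = 3 := by
    rw [Fintype.card_coe, hcardA3]
  have hcardB : Fintype.card {j // j ∉ ({f, g, h} : Finset (Fin 4))} = 1 := by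
    rw [Fintype.card_subtype_compl, hcardA, Fintype.card_fin]
  -- Bessel bounds
  have hbesA := L3aux.bessel hd0 lam hherm htr horth ρA hApsd hAtr
  have hbesB := L3aux.bessel hd0 lam hherm htr horth ρB hBpsd hBtr
  rw [hcardA] at hbesA
  rw [hcardB] at hbesB
  have hU : ∑ r, (u r) ^ 2 ≤ 2 ^ 3 * (1 - (1 / (d : ℝ)) ^ 3) := by
    simp only [hu]
    refine le_trans ?_ hbesA
    refine L3aux.sum_sq_le_of_inj (fun b => ((ρA * L3aux.SMat lam b).trace).re)
      (fun r : Fin (d ^ 2 - 1) × Fin (d ^ 2 - 1) × Fin (d ^ 2 - 1) =>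
        fun j : {j // j ∈ ({f, g, h} : Finset (Fin 4))} =>
        if j.1 = f then r.1 else if j.1 = g then r.2.1 else r.2.2) ?_
    intro r r' hrr
    have h1 := congrFun hrr ⟨f, by simp⟩
    have h2 := congrFun hrr ⟨g, by simp⟩
    have h3 := congrFun hrr ⟨h, by simp⟩
    simp [Ne.symm hfg, Ne.symm hfh, Ne.symm hgh] at h1 h2 h3
    obtain ⟨r1, r2, r3⟩ := r
    obtain ⟨s1, s2, s3⟩ := r'
    simp_all
  have hV : ∑ c₀, (v c₀) ^ 2 ≤ 2 ^ 1 * (1 - (1 / (d : ℝ)) ^ 1) := by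
    simp only [hv]
    refine le_trans ?_ hbesB
    exact L3aux.sum_sq_le_of_inj (fun b => ((ρB * L3aux.SMat lam b).trace).re)
      (fun c₀ => fun _ : {j // j ∉ ({f, g, h} : Finset (Fin 4))} => c₀)
      (fun c₁ c₂ hcc => congrFun hcc ⟨l, hlA⟩)
  -- final numerics
  rw [hT]
  refine le_trans (L3aux.kyFan_vecMulVec_le u v k) ?_
  set D := (d : ℝ) with hD
  have hD2 : (2 : ℝ) ≤ D := by rw [hD]; exact_mod_cast hd
  have hDpos : (0 : ℝ) < D := by linarith
  have hD1 : 1 / D ≤ 1 := by rw [div_le_one hDpos]; linarith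
  have hD1' : 0 ≤ 1 / D := by positivity
  have hvnn : 0 ≤ ∑ c₀, (v c₀) ^ 2 := Finset.sum_nonneg fun _ _ => sq_nonneg _
  have hbAnn : (0 : ℝ) ≤ 2 ^ 3 * (1 - (1 / D) ^ 3) := by
    have := pow_le_one₀ hD1' hD1 (n := 3)
    nlinarith
  have hmul := mul_le_mul hU hV hvnn hbAnn
  have hident : (2 : ℝ) ^ 3 * (1 - (1 / D) ^ 3) * (2 ^ 1 * (1 - (1 / D) ^ 1))
      = (4 * (D - 1) / D ^ 2) ^ 2 * (D ^ 2 + D + 1) := by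
    have hDne : D ≠ 0 := ne_of_gt hDpos
    field_simp
    ring
  refine le_trans (Real.sqrt_le_sqrt (le_trans hmul (le_of_eq hident))) ?_
  have h4nn : (0 : ℝ) ≤ 4 * (D - 1) / D ^ 2 := by
    apply div_nonneg (by nlinarith) (by positivity)
  rw [Real.sqrt_mul (sq_nonneg _), Real.sqrt_sq h4nn]
  exact le_of_eq (by ring)
end

section
/- (Lemma 3(ii)) Let f,g,h,l be a permutation of 1,2,3,4 and let ρ be a pure density matrix on (ℂ^d)^{⊗4} that is separable under at least one bipartition of {1,2,3,4} (i.e. ρ = ρ_A ⊗ ρ_B, up to permutation of tensor factors, for some bipartition A|B into two nonempty complementary subsets) but entangled (not separable) under the bipartition fgh|l. Then for every k = 1,…,d²−1, ‖T_{fgh|l}‖_k ≤ 4√k·(d²−1)/d². -/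
open Matrix ComplexOrder

section AuxSum

/-- Sum over a function space of a product equals the product of sums. -/
lemma sum_fn_prod {ι κ : Type*} [Fintype ι] [DecidableEq ι] [Fintype κ]
    {R : Type*} [CommSemiring R] (F : ι → κ → R) :
    ∑ u : ι → κ, ∏ j, F j (u j) = ∏ j, ∑ x, F j x := by
  classical
  rw [show (Finset.univ : Finset (ι → κ)) = Fintype.piFinset (fun _ => Finset.univ) from
    (Fintype.piFinset_univ).symm]
  exact (Finset.prod_univ_sum _ _).symm

lemma sum_four_factor {α β γ δ : Type*} [Fintype α] [Fintype β] [Fintype γ] [Fintype δ]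
    (F : α → γ → ℂ) (G : β → δ → ℂ) :
    ∑ p : α, ∑ q : β, ∑ r : γ, ∑ s : δ, F p r * G q s
      = (∑ p, ∑ r, F p r) * (∑ q, ∑ s, G q s) := by
  rw [Finset.sum_mul]
  refine Finset.sum_congr rfl fun p _ => ?_
  calc ∑ q : β, ∑ r : γ, ∑ s : δ, F p r * G q s
      = ∑ r : γ, ∑ q : β, ∑ s : δ, F p r * G q s := Finset.sum_comm
    _ = ∑ r : γ, F p r * (∑ q : β, ∑ s : δ, G q s) := by
        refine Finset.sum_congr rfl fun r _ => ?_
        rw [Finset.mul_sum]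
        refine Finset.sum_congr rfl fun q _ => ?_
        rw [Finset.mul_sum]
    _ = (∑ r : γ, F p r) * (∑ q : β, ∑ s : δ, G q s) := (Finset.sum_mul _ _ _).symm

end AuxSum

section Eig

variable {n : Type*} [Fintype n] [DecidableEq n]

lemma trace_eq_sum_eigs {𝕜 : Type*} [RCLike 𝕜] {A : Matrix n n 𝕜} (hA : A.IsHermitian) :
    A.trace = ∑ i, (hA.eigenvalues i : 𝕜) := by
  conv_lhs => rw [hA.spectral_theorem, Unitary.conjStarAlgAut_apply]
  rw [Matrix.trace_mul_cycle]
  have h1 : (star (hA.eigenvectorUnitary : Matrix n n 𝕜)) *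
      (hA.eigenvectorUnitary : Matrix n n 𝕜) = 1 := by
    simpa using (Unitary.star_mul_self_of_mem (hA.eigenvectorUnitary).2)
  rw [h1, Matrix.one_mul, Matrix.trace_diagonal]
  rfl

lemma re_trace_sq_le_one {ρ : Matrix n n ℂ} (hpsd : ρ.PosSemidef) (htr : ρ.trace = 1) :
    (Matrix.trace (ρ * ρ)).re ≤ 1 := by
  have hH := hpsd.1
  have h1 : star (hH.eigenvectorUnitary : Matrix n n ℂ) * (hH.eigenvectorUnitary : Matrix n n ℂ) = 1 := by
    simpa using (Unitary.star_mul_self_of_mem (hH.eigenvectorUnitary).2)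
  set U : Matrix n n ℂ := (hH.eigenvectorUnitary : Matrix n n ℂ) with hU
  set D : Matrix n n ℂ := Matrix.diagonal (RCLike.ofReal ∘ hH.eigenvalues) with hD
  have h1' : ∀ X : Matrix n n ℂ, star U * (U * X) = X := by
    intro X; rw [← Matrix.mul_assoc, h1, Matrix.one_mul]
  have hexp : ρ * ρ = U * (D * D) * star U := by
    conv_lhs => rw [hH.spectral_theorem, Unitary.conjStarAlgAut_apply]
    simp only [Matrix.mul_assoc]
    rw [h1']
  have htrace : Matrix.trace (ρ * ρ) = ∑ i, ((hH.eigenvalues i : ℂ) * (hH.eigenvalues i : ℂ)) := by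
    rw [hexp, Matrix.trace_mul_cycle, h1, Matrix.one_mul, hD, Matrix.diagonal_mul_diagonal,
      Matrix.trace_diagonal]
    rfl
  have hsum1 : ∑ i, hH.eigenvalues i = 1 := by
    have := trace_eq_sum_eigs hH
    rw [htr] at this
    have h2 : ((∑ i, hH.eigenvalues i : ℝ) : ℂ) = 1 := by
      push_cast
      exact this.symm
    exact_mod_cast h2
  have hnn : ∀ i, 0 ≤ hH.eigenvalues i := fun i => hpsd.eigenvalues_nonneg i
  have hle1 : ∀ i, hH.eigenvalues i ≤ 1 := by
    intro i
    rw [← hsum1]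
    exact Finset.single_le_sum (fun j _ => hnn j) (Finset.mem_univ i)
  have : (Matrix.trace (ρ * ρ)).re = ∑ i, hH.eigenvalues i * hH.eigenvalues i := by
    rw [htrace]
    push_cast
    rw [Complex.re_sum]
    simp
  rw [this, ← hsum1]
  refine Finset.sum_le_sum fun i _ => ?_
  nlinarith [hnn i, hle1 i]

end Eig

section LamBig

variable {d : ℕ} (lam : Fin (d ^ 2 - 1) → Matrix (Fin d) (Fin d) ℂ)

/-- The tensor product `λ_{a j}` over the parties `j : ι`. -/
noncomputable def lamBig {ι : Type*} [Fintype ι] (a : ι → Fin (d ^ 2 - 1)) :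
    Matrix (ι → Fin d) (ι → Fin d) ℂ :=
  Matrix.of fun v w => ∏ j, lam (a j) (v j) (w j)

variable {ι : Type*} [Fintype ι] [DecidableEq ι]

lemma trace_expand {α β : Type*} [Fintype α] [Fintype β] {R : Type*} [NonUnitalNonAssocSemiring R]
    (X : Matrix α β R) (Y : Matrix β α R) :
    (X * Y).trace = ∑ v, ∑ w, X v w * Y w v := by
  simp [Matrix.trace, Matrix.diag, Matrix.mul_apply]

lemma trace_lamBig_mul (a b : ι → Fin (d ^ 2 - 1)) :
    (lamBig lam a * lamBig lam b).trace = ∏ j, (lam (a j) * lam (b j)).trace := by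
  classical
  rw [trace_expand]
  have h1 : ∑ v : ι → Fin d, ∑ w : ι → Fin d, lamBig lam a v w * lamBig lam b w v
      = ∑ p : (ι → Fin d) × (ι → Fin d), ∏ j, (lam (a j) (p.1 j) (p.2 j) * lam (b j) (p.2 j) (p.1 j)) := by
    rw [Fintype.sum_prod_type]
    refine Finset.sum_congr rfl fun v _ => Finset.sum_congr rfl fun w _ => ?_
    simp [lamBig, Finset.prod_mul_distrib]
  rw [h1]
  have h3 : ∑ p : (ι → Fin d) × (ι → Fin d), ∏ j, (lam (a j) (p.1 j) (p.2 j) * lam (b j) (p.2 j) (p.1 j))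
      = ∑ u : ι → Fin d × Fin d, ∏ j, (lam (a j) (u j).1 (u j).2 * lam (b j) (u j).2 (u j).1) :=
    (Equiv.sum_comp (Equiv.arrowProdEquivProdArrow ι (fun _ => Fin d) (fun _ => Fin d))
      (fun p => ∏ j, (lam (a j) (p.1 j) (p.2 j) * lam (b j) (p.2 j) (p.1 j)))).symm
  rw [h3, sum_fn_prod (fun j (x : Fin d × Fin d) => lam (a j) x.1 x.2 * lam (b j) x.2 x.1)]
  refine Finset.prod_congr rfl fun j _ => ?_
  rw [trace_expand]
  rw [Fintype.sum_prod_type]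

lemma trace_lamBig [Nonempty ι] (htr : ∀ i, (lam i).trace = 0) (a : ι → Fin (d ^ 2 - 1)) :
    (lamBig lam a).trace = 0 := by
  have h1 : (lamBig lam a).trace = ∑ v : ι → Fin d, ∏ j, lam (a j) (v j) (v j) := by
    simp [lamBig, Matrix.trace, Matrix.diag]
  rw [h1, sum_fn_prod (fun j (x : Fin d) => lam (a j) x x)]
  obtain ⟨j0⟩ := ‹Nonempty ι›
  refine Finset.prod_eq_zero (Finset.mem_univ j0) ?_
  simpa [Matrix.trace, Matrix.diag] using htr (a j0)

lemma lamBig_herm (hherm : ∀ i, (lam i).IsHermitian) (a : ι → Fin (d ^ 2 - 1)) :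
    (lamBig lam a)ᴴ = lamBig lam a := by
  ext v w
  simp only [Matrix.conjTranspose_apply, lamBig, Matrix.of_apply, star_prod]
  exact Finset.prod_congr rfl fun j _ => (hherm (a j)).apply _ _

end LamBig

section Embed

noncomputable def embMat {n : Type*} [Fintype n] (M : Matrix n n ℂ) :
    EuclideanSpace ℂ (n × n) :=
  (WithLp.equiv 2 _).symm (fun p => M p.1 p.2)

lemma inner_embMat {n : Type*} [Fintype n] (X Y : Matrix n n ℂ) :
    (inner ℂ (embMat X) (embMat Y) : ℂ) = (Xᴴ * Y).trace := by
  classical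
  have h1 : (inner ℂ (embMat X) (embMat Y) : ℂ)
      = ∑ i, ∑ j, (starRingEnd ℂ) (X i j) * Y i j := by
    simp [embMat, PiLp.inner_apply, PiLp.toLp_apply, WithLp.equiv_symm_apply, RCLike.inner_apply,
      Fintype.sum_prod_type]
    exact Finset.sum_congr rfl fun i _ => Finset.sum_congr rfl fun j _ => mul_comm _ _
  rw [h1, trace_expand]
  simp only [Matrix.conjTranspose_apply]
  rw [Finset.sum_comm]
  simp [RCLike.star_def]

lemma norm_embMat_sq {n : Type*} [Fintype n] (X : Matrix n n ℂ) :
    ‖embMat X‖ ^ 2 = ((Xᴴ * X).trace).re := by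
  rw [← inner_self_eq_norm_sq (𝕜 := ℂ) (embMat X), inner_embMat]
  rfl

end Embed

section Bessel

lemma bessel_bound {d : ℕ} (hd : 2 ≤ d) (lam : Fin (d ^ 2 - 1) → Matrix (Fin d) (Fin d) ℂ)
    (hherm : ∀ i, (lam i).IsHermitian)
    (htr : ∀ i, (lam i).trace = 0)
    (horth : ∀ i j, (lam i * lam j).trace = if i = j then 2 else 0)
    {ι : Type*} [Fintype ι] [DecidableEq ι] [Nonempty ι]
    (ρ : Matrix (ι → Fin d) (ι → Fin d) ℂ) (hpsd : ρ.PosSemidef) (htrρ : ρ.trace = 1) :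
    ∑ a : ι → Fin (d ^ 2 - 1), ‖(ρ * lamBig lam a).trace‖ ^ 2
      ≤ 2 ^ Fintype.card ι * (1 - ((d : ℝ) ^ Fintype.card ι)⁻¹) := by
  classical
  set m := Fintype.card ι with hm
  have hd0 : (0:ℝ) < (d:ℝ) := by
    have : (2:ℝ) ≤ (d:ℝ) := by exact_mod_cast hd
    linarith
  have hdm : (0:ℝ) < (d:ℝ) ^ m := by positivity
  have h2m : (0:ℝ) < (2:ℝ) ^ m := by positivity
  set c1 : ℝ := (Real.sqrt ((d:ℝ) ^ m))⁻¹ with hc1def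
  set c2 : ℝ := (Real.sqrt ((2:ℝ) ^ m))⁻¹ with hc2def
  have hc1nn : 0 ≤ c1 := by positivity
  have hc2nn : 0 ≤ c2 := by positivity
  have hc1sq : c1 * c1 = ((d:ℝ) ^ m)⁻¹ := by
    rw [hc1def, ← mul_inv, Real.mul_self_sqrt hdm.le]
  have hc2sq : c2 * c2 = ((2:ℝ) ^ m)⁻¹ := by
    rw [hc2def, ← mul_inv, Real.mul_self_sqrt h2m.le]
  have hcard : (Fintype.card ((ι → Fin d) : Type _) : ℝ) = (d:ℝ) ^ m := by
    rw [Fintype.card_fun]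
    push_cast
    simp [hm]
  set V : Option (ι → Fin (d ^ 2 - 1)) → EuclideanSpace ℂ ((ι → Fin d) × (ι → Fin d)) :=
    fun o => Option.elim o ((c1 : ℂ) • embMat (1 : Matrix (ι → Fin d) (ι → Fin d) ℂ))
      (fun a => (c2 : ℂ) • embMat (lamBig lam a)) with hV
  have hv : Orthonormal ℂ V := by
    rw [orthonormal_iff_ite]
    intro o1 o2
    cases o1 with
    | none =>
      cases o2 with
      | none =>
        simp only [hV, Option.elim, inner_smul_left, inner_smul_right, inner_embMat,
          Matrix.conjTranspose_one, Matrix.one_mul, Matrix.trace_one, Complex.conj_ofReal,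
          if_pos rfl]
        have : ((c1 * c1 * ((d:ℝ)^m) : ℝ) : ℂ) = 1 := by
          rw [hc1sq, inv_mul_cancel₀ hdm.ne']
          norm_num
        rw [← this]
        push_cast [← hcard]
        ring
      | some b =>
        simp only [hV, Option.elim, inner_smul_left, inner_smul_right, inner_embMat,
          Matrix.conjTranspose_one, Matrix.one_mul]
        rw [trace_lamBig lam htr b]
        simp
    | some a =>
      cases o2 with
      | none =>
        simp only [hV, Option.elim, inner_smul_left, inner_smul_right, inner_embMat,
          Matrix.mul_one, lamBig_herm lam hherm a]
        rw [trace_lamBig lam htr a]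
        simp
      | some b =>
        simp only [hV, Option.elim, inner_smul_left, inner_smul_right, inner_embMat,
          lamBig_herm lam hherm a, Complex.conj_ofReal]
        rw [trace_lamBig_mul lam a b]
        by_cases hab : a = b
        · subst hab
          have hprod : ∏ j : ι, (lam (a j) * lam (a j)).trace = ((2:ℝ)^m : ℝ) := by
            have : ∀ j : ι, (lam (a j) * lam (a j)).trace = 2 := by
              intro j; rw [horth]; simp
            rw [Finset.prod_congr rfl (fun j _ => this j)]
            rw [Finset.prod_const]
            push_cast
            simp [hm]
          rw [hprod]
          have : ((c2 * c2 * ((2:ℝ)^m) : ℝ) : ℂ) = 1 := by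
            rw [hc2sq, inv_mul_cancel₀ h2m.ne']
            norm_num
          rw [← this]
          push_cast
          ring_nf
          simp
        · obtain ⟨j0, hj0⟩ := Function.ne_iff.mp hab
          have hz : ∏ j : ι, (lam (a j) * lam (b j)).trace = 0 :=
            Finset.prod_eq_zero (Finset.mem_univ j0) (by rw [horth]; simp [hj0])
          rw [hz]
          simp [hab]
  have hb := hv.sum_inner_products_le (x := embMat ρ) (s := (Finset.univ : Finset (Option (ι → Fin (d ^ 2 - 1)))))
  rw [Fintype.sum_option] at hb
  have hnone : ‖(inner ℂ (V none) (embMat ρ) : ℂ)‖ ^ 2 = ((d:ℝ)^m)⁻¹ := by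
    simp only [hV, Option.elim, inner_smul_left, inner_embMat, Matrix.conjTranspose_one,
      Matrix.one_mul, htrρ, Complex.conj_ofReal, mul_one]
    rw [Complex.norm_real]
    rw [Real.norm_of_nonneg hc1nn, ← hc1sq]
    ring
  have hsome : ∀ a : ι → Fin (d ^ 2 - 1),
      ‖(inner ℂ (V (some a)) (embMat ρ) : ℂ)‖ ^ 2 = ((2:ℝ)^m)⁻¹ * ‖(ρ * lamBig lam a).trace‖ ^ 2 := by
    intro a
    simp only [hV, Option.elim, inner_smul_left, inner_embMat,
      lamBig_herm lam hherm a, Complex.conj_ofReal]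
    rw [Matrix.trace_mul_comm]
    rw [norm_mul, Complex.norm_real, Real.norm_of_nonneg hc2nn, mul_pow, ← hc2sq]
    ring
  rw [hnone] at hb
  rw [Finset.sum_congr rfl (fun a _ => hsome a)] at hb
  have hnorm : ‖embMat ρ‖ ^ 2 ≤ 1 := by
    rw [norm_embMat_sq, hpsd.1]
    exact re_trace_sq_le_one hpsd htrρ
  have hb2 : ((d:ℝ)^m)⁻¹ + ((2:ℝ)^m)⁻¹ * ∑ a : ι → Fin (d ^ 2 - 1), ‖(ρ * lamBig lam a).trace‖ ^ 2 ≤ 1 := by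
    rw [Finset.mul_sum]
    exact le_trans hb hnorm
  have key : ∑ a : ι → Fin (d ^ 2 - 1), ‖(ρ * lamBig lam a).trace‖ ^ 2
      ≤ 2 ^ m * (1 - ((d:ℝ)^m)⁻¹) := by
    have h1 : ((2:ℝ)^m)⁻¹ * ∑ a : ι → Fin (d ^ 2 - 1), ‖(ρ * lamBig lam a).trace‖ ^ 2
        ≤ 1 - ((d:ℝ)^m)⁻¹ := by linarith
    calc ∑ a : ι → Fin (d ^ 2 - 1), ‖(ρ * lamBig lam a).trace‖ ^ 2
        = (2:ℝ)^m * (((2:ℝ)^m)⁻¹ * ∑ a : ι → Fin (d ^ 2 - 1), ‖(ρ * lamBig lam a).trace‖ ^ 2) := by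
          rw [← mul_assoc, mul_inv_cancel₀ h2m.ne', one_mul]
      _ ≤ (2:ℝ)^m * (1 - ((d:ℝ)^m)⁻¹) := by
          exact mul_le_mul_of_nonneg_left h1 h2m.le
  calc ∑ a : ι → Fin (d ^ 2 - 1), ‖(ρ * lamBig lam a).trace‖ ^ 2
      ≤ 2 ^ m * (1 - ((d:ℝ)^m)⁻¹) := key
    _ = 2 ^ Fintype.card ι * (1 - ((d : ℝ) ^ Fintype.card ι)⁻¹) := by rw [hm]

end Bessel

section Split

variable {n : ℕ}

/-- Splitting a function on `Fin n` into its restrictions to `A` and to the complement. -/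
def splitE (A : Finset (Fin n)) (κ : Type*) :
    (Fin n → κ) ≃ ({j // j ∈ A} → κ) × ({j // j ∉ A} → κ) where
  toFun v := (fun j => v j.1, fun j => v j.1)
  invFun p := fun j => if h : j ∈ A then p.1 ⟨j, h⟩ else p.2 ⟨j, h⟩
  left_inv v := by
    funext j
    by_cases h : j ∈ A <;> simp [h]
  right_inv p := by
    refine Prod.ext ?_ ?_ <;> funext j
    · simp [j.2]
    · simp [j.2]

lemma splitE_symm_fst {A : Finset (Fin n)} {κ : Type*} (p : ({j // j ∈ A} → κ) × ({j // j ∉ A} → κ))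
    (j : {j // j ∈ A}) : (splitE A κ).symm p j.1 = p.1 j := by
  simp [splitE, j.2]

lemma splitE_symm_snd {A : Finset (Fin n)} {κ : Type*} (p : ({j // j ∈ A} → κ) × ({j // j ∉ A} → κ))
    (j : {j // j ∉ A}) : (splitE A κ).symm p j.1 = p.2 j := by
  simp [splitE, j.2]

lemma trace_factor {d : ℕ} (lam : Fin (d ^ 2 - 1) → Matrix (Fin d) (Fin d) ℂ)
    (A : Finset (Fin n))
    (ρ : Matrix (Fin n → Fin d) (Fin n → Fin d) ℂ)
    (ρA : Matrix ({j // j ∈ A} → Fin d) ({j // j ∈ A} → Fin d) ℂ)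
    (ρB : Matrix ({j // j ∉ A} → Fin d) ({j // j ∉ A} → Fin d) ℂ)
    (hsep : ∀ v w, ρ v w = ρA (fun j => v j.1) (fun j => w j.1) * ρB (fun j => v j.1) (fun j => w j.1))
    (a : Fin n → Fin (d ^ 2 - 1)) :
    (ρ * lamBig lam a).trace
      = (ρA * lamBig lam (fun j : {j // j ∈ A} => a j.1)).trace
        * (ρB * lamBig lam (fun j : {j // j ∉ A} => a j.1)).trace := by
  classical
  rw [trace_expand, trace_expand, trace_expand]
  -- split both sums over `Fin n → Fin d`
  have e := splitE A (Fin d)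
  have hsum : ∑ v : Fin n → Fin d, ∑ w : Fin n → Fin d, ρ v w * lamBig lam a w v
      = ∑ p : ({j // j ∈ A} → Fin d) × ({j // j ∉ A} → Fin d),
          ∑ q : ({j // j ∈ A} → Fin d) × ({j // j ∉ A} → Fin d),
          ρ ((splitE A (Fin d)).symm p) ((splitE A (Fin d)).symm q)
            * lamBig lam a ((splitE A (Fin d)).symm q) ((splitE A (Fin d)).symm p) := by
    rw [← Equiv.sum_comp (splitE A (Fin d)).symm
      (fun v => ∑ w : Fin n → Fin d, ρ v w * lamBig lam a w v)]
    refine Finset.sum_congr rfl fun p _ => ?_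
    rw [← Equiv.sum_comp (splitE A (Fin d)).symm
      (fun w => ρ ((splitE A (Fin d)).symm p) w * lamBig lam a w ((splitE A (Fin d)).symm p))]
  rw [hsum]
  have hterm : ∀ p q : ({j // j ∈ A} → Fin d) × ({j // j ∉ A} → Fin d),
      ρ ((splitE A (Fin d)).symm p) ((splitE A (Fin d)).symm q)
        * lamBig lam a ((splitE A (Fin d)).symm q) ((splitE A (Fin d)).symm p)
      = (ρA p.1 q.1 * lamBig lam (fun j : {j // j ∈ A} => a j.1) q.1 p.1)
        * (ρB p.2 q.2 * lamBig lam (fun j : {j // j ∉ A} => a j.1) q.2 p.2) := by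
    intro p q
    have hρ : ρ ((splitE A (Fin d)).symm p) ((splitE A (Fin d)).symm q) = ρA p.1 q.1 * ρB p.2 q.2 := by
      rw [hsep]
      congr 1
      · congr 1 <;> funext j <;> rw [splitE_symm_fst]
      · congr 1 <;> funext j <;> rw [splitE_symm_snd]
    have hΛ : lamBig lam a ((splitE A (Fin d)).symm q) ((splitE A (Fin d)).symm p)
        = lamBig lam (fun j : {j // j ∈ A} => a j.1) q.1 p.1
          * lamBig lam (fun j : {j // j ∉ A} => a j.1) q.2 p.2 := by
      simp only [lamBig, Matrix.of_apply]
      rw [← Finset.prod_mul_prod_compl A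
        (fun j => lam (a j) ((splitE A (Fin d)).symm q j) ((splitE A (Fin d)).symm p j))]
      congr 1
      · rw [← Finset.prod_coe_sort A
          (fun j => lam (a j) ((splitE A (Fin d)).symm q j) ((splitE A (Fin d)).symm p j))]
        refine Finset.prod_congr rfl fun j _ => ?_
        rw [splitE_symm_fst, splitE_symm_fst]
      · rw [Finset.prod_subtype Aᶜ (fun x => Finset.mem_compl) 
          (fun j => lam (a j) ((splitE A (Fin d)).symm q j) ((splitE A (Fin d)).symm p j))]
        refine Finset.prod_congr rfl fun j _ => ?_
        rw [splitE_symm_snd, splitE_symm_snd]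
    rw [hρ, hΛ]
    ring
  rw [Finset.sum_congr rfl (fun p _ => Finset.sum_congr rfl (fun q _ => hterm p q))]
  -- now regroup the four sums
  rw [Fintype.sum_prod_type]
  have := sum_four_factor
    (fun (p : {j // j ∈ A} → Fin d) (q : {j // j ∈ A} → Fin d) =>
      ρA p q * lamBig lam (fun j : {j // j ∈ A} => a j.1) q p)
    (fun (p : {j // j ∉ A} → Fin d) (q : {j // j ∉ A} → Fin d) =>
      ρB p q * lamBig lam (fun j : {j // j ∉ A} => a j.1) q p)
  rw [← this]
  refine Finset.sum_congr rfl fun p1 _ => ?_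
  refine Finset.sum_congr rfl fun p2 _ => ?_
  rw [Fintype.sum_prod_type]

end Split

section SumSplit

lemma sum_split_factor {n : ℕ} (A : Finset (Fin n)) {κ : Type*} [Fintype κ]
    (φ : ({j // j ∈ A} → κ) → ℝ) (ψ : ({j // j ∉ A} → κ) → ℝ) :
    ∑ a : Fin n → κ, φ (fun j => a j.1) * ψ (fun j => a j.1)
      = (∑ b, φ b) * (∑ c, ψ c) := by
  classical
  rw [← Equiv.sum_comp (splitE A κ).symm
    (fun a : Fin n → κ => φ (fun j => a j.1) * ψ (fun j => a j.1))]
  have hp : ∀ p : ({j // j ∈ A} → κ) × ({j // j ∉ A} → κ),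
      φ (fun j : {j // j ∈ A} => (splitE A κ).symm p j.1)
        * ψ (fun j : {j // j ∉ A} => (splitE A κ).symm p j.1) = φ p.1 * ψ p.2 := by
    intro p
    congr 1
    · congr 1; funext j; rw [splitE_symm_fst]
    · congr 1; funext j; rw [splitE_symm_snd]
  rw [Finset.sum_congr rfl (fun p _ => hp p), Fintype.sum_prod_type, Finset.sum_mul_sum]

end SumSplit

section Numeric

lemma numeric_bound (d : ℕ) (hd : 2 ≤ d) (m : ℕ) (hm1 : 1 ≤ m) (hm3 : m ≤ 3) :
    (2:ℝ)^m * (1 - ((d:ℝ)^m)⁻¹) * ((2:ℝ)^(4-m) * (1 - ((d:ℝ)^(4-m))⁻¹))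
      ≤ 16 * (((d:ℝ)^2 - 1) / (d:ℝ)^2)^2 := by
  have hd2 : (2:ℝ) ≤ (d:ℝ) := by exact_mod_cast hd
  have hd0 : (0:ℝ) < (d:ℝ) := by linarith
  set x : ℝ := (d:ℝ) with hx
  have hkey : ∀ a b : ℕ, a + b = 4 → (x^a - 1) * (x^b - 1) ≤ (x^2 - 1)^2 → 
      (2:ℝ)^a * (1 - (x^a)⁻¹) * ((2:ℝ)^b * (1 - (x^b)⁻¹)) ≤ 16 * ((x^2 - 1) / x^2)^2 := by
    intro a b hab hineq
    have hxa : (0:ℝ) < x^a := by positivity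
    have hxb : (0:ℝ) < x^b := by positivity
    have h2ab : (2:ℝ)^a * (2:ℝ)^b = 16 := by
      rw [← pow_add, hab]; norm_num
    have e1 : (1 - (x^a)⁻¹) = (x^a - 1) / x^a := by field_simp
    have e2 : (1 - (x^b)⁻¹) = (x^b - 1) / x^b := by field_simp
    have e3 : x^a * x^b = x^4 := by rw [← pow_add, hab]
    rw [e1, e2, div_pow]
    have lhs_eq : (2:ℝ)^a * ((x^a - 1) / x^a) * ((2:ℝ)^b * ((x^b - 1) / x^b))
        = 16 * ((x^a - 1) * (x^b - 1)) / x^4 := by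
      field_simp
      linear_combination ((x^a-1)*(x^b-1)*x^4) * h2ab - 16*(x^a-1)*(x^b-1) * e3
    rw [lhs_eq]
    have rhs_eq : 16 * ((x^2-1)^2 / (x^2)^2) = 16 * (x^2-1)^2 / x^4 := by
      rw [← pow_mul]; ring
    rw [rhs_eq]
    gcongr
  have hx1 : (1:ℝ) ≤ x := by linarith
  interval_cases m
  · exact hkey 1 3 rfl (by nlinarith [mul_nonneg hd0.le (sq_nonneg (x-1))])
  · exact hkey 2 2 rfl (le_of_eq (sq (x^2-1)).symm)
  · exact hkey 3 1 rfl (by nlinarith [mul_nonneg hd0.le (sq_nonneg (x-1))])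

end Numeric

/-- (Lemma 3(ii)) If a pure four-partite state is separable under at least one bipartition
but entangled under the bipartition `fgh|l`, then `‖T_{fgh|l}‖_k ≤ 4√k(d²-1)/d²`. -/
theorem kyFan_T3v1_of_entangled (d : ℕ) (hd : 2 ≤ d)
    (lam : Fin (d ^ 2 - 1) → Matrix (Fin d) (Fin d) ℂ)
    (hherm : ∀ i, (lam i).IsHermitian)
    (htr : ∀ i, (lam i).trace = 0)
    (horth : ∀ i j, (lam i * lam j).trace = if i = j then 2 else 0)
    (f g h l : Fin 4) (hperm : ({f, g, h, l} : Finset (Fin 4)) = Finset.univ)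
    (ρ : Matrix (Fin 4 → Fin d) (Fin 4 → Fin d) ℂ)
    (hpsd : ρ.PosSemidef) (htrρ : ρ.trace = 1) (hpure : ρ * ρ = ρ)
    (hsome : ∃ A : Finset (Fin 4), A.Nonempty ∧ A ≠ Finset.univ ∧ SepUnder ρ A)
    (hent : ¬ SepUnder ρ {f, g, h})
    (k : ℕ) (hk1 : 1 ≤ k) (hk2 : k ≤ d ^ 2 - 1) :
    kyFan k (T3v1 lam ρ f g h l)
      ≤ 4 * Real.sqrt k * ((d : ℝ) ^ 2 - 1) / (d : ℝ) ^ 2 := by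
  classical
  obtain ⟨A, hAne, hAuniv, ρA, ρB, hApsd, hAtr, hBpsd, hBtr, hsep⟩ := hsome
  have hAinh : Nonempty {j // j ∈ A} := by
    obtain ⟨x, hx⟩ := hAne; exact ⟨⟨x, hx⟩⟩
  have hBinh : Nonempty {j // j ∉ A} := by
    have hex : ∃ j, j ∉ A := by
      by_contra hc; push_neg at hc; exact hAuniv (Finset.eq_univ_iff_forall.mpr hc)
    obtain ⟨x, hx⟩ := hex; exact ⟨⟨x, hx⟩⟩
  have hd2 : (2:ℝ) ≤ (d:ℝ) := by exact_mod_cast hd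
  have hd0 : (0:ℝ) < (d:ℝ) := by linarith
  set q : ℝ := ((d:ℝ)^2 - 1) / (d:ℝ)^2 with hqdef
  have hq0 : (0:ℝ) ≤ q := by
    have h1 : (1:ℝ) ≤ (d:ℝ)^2 := by nlinarith
    rw [hqdef]
    apply div_nonneg (by linarith) (by positivity)
  -- Bessel bounds for the two factors
  have hSA := bessel_bound hd lam hherm htr horth ρA hApsd hAtr
  have hSB := bessel_bound hd lam hherm htr horth ρB hBpsd hBtr
  have hcA : Fintype.card {j // j ∈ A} = A.card := Fintype.card_coe A
  have hcB : Fintype.card {j // j ∉ A} = 4 - A.card := by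
    rw [Fintype.card_subtype_compl, hcA, Fintype.card_fin]
  have hm1 : 1 ≤ A.card := Finset.card_pos.mpr hAne
  have hm3 : A.card ≤ 3 := by
    have h4 : A.card ≤ 4 := by simpa using Finset.card_le_univ A
    have hne4 : A.card ≠ 4 := fun hc =>
      hAuniv ((Finset.card_eq_iff_eq_univ A).mp (by rw [Fintype.card_fin]; exact hc))
    omega
  have hSB0 : (0:ℝ) ≤ ∑ c : {j // j ∉ A} → Fin (d^2-1), ‖(ρB * lamBig lam c).trace‖^2 :=
    Finset.sum_nonneg fun _ _ => by positivity
  have hbndA0 : (0:ℝ) ≤ 2 ^ Fintype.card {j // j ∈ A}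
      * (1 - ((d:ℝ) ^ Fintype.card {j // j ∈ A})⁻¹) := by
    have h1 : (1:ℝ) ≤ (d:ℝ) ^ Fintype.card {j // j ∈ A} := one_le_pow₀ (by linarith)
    have h2 : ((d:ℝ) ^ Fintype.card {j // j ∈ A})⁻¹ ≤ 1 := by
      rw [inv_le_one_iff₀]; right; exact h1
    exact mul_nonneg (by positivity) (by linarith)
  have hfact : ∀ a : Fin 4 → Fin (d^2-1), ‖(ρ * lamBig lam a).trace‖^2
      = ‖(ρA * lamBig lam (fun j : {j // j ∈ A} => a j.1)).trace‖^2
        * ‖(ρB * lamBig lam (fun j : {j // j ∉ A} => a j.1)).trace‖^2 := fun a => by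
    rw [trace_factor lam A ρ ρA ρB hsep a, norm_mul, mul_pow]
  have hsumfact : ∑ a : Fin 4 → Fin (d^2-1), ‖(ρ * lamBig lam a).trace‖^2
      = (∑ b : {j // j ∈ A} → Fin (d^2-1), ‖(ρA * lamBig lam b).trace‖^2)
        * (∑ c : {j // j ∉ A} → Fin (d^2-1), ‖(ρB * lamBig lam c).trace‖^2) := by
    rw [Finset.sum_congr rfl (fun a _ => hfact a)]
    exact sum_split_factor A (fun b => ‖(ρA * lamBig lam b).trace‖^2)
      (fun c => ‖(ρB * lamBig lam c).trace‖^2)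
  have hSall : ∑ a : Fin 4 → Fin (d^2-1), ‖(ρ * lamBig lam a).trace‖^2 ≤ 16 * q^2 := by
    rw [hsumfact]
    refine (mul_le_mul hSA hSB hSB0 hbndA0).trans ?_
    rw [hcA, hcB, hqdef]
    exact numeric_bound d hd A.card hm1 hm3
  -- distinctness of f g h l
  have Hdist : ∀ f g h l : Fin 4, ({f,g,h,l} : Finset (Fin 4)) = Finset.univ →
      f ≠ g ∧ f ≠ h ∧ f ≠ l ∧ g ≠ h ∧ g ≠ l ∧ h ≠ l := by decide
  obtain ⟨hfg, hfh, hfl, hgh, hgl, hhl⟩ := Hdist f g h l hperm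
  have hmem : ∀ j : Fin 4, j = f ∨ j = g ∨ j = h ∨ j = l := by
    intro j
    have hj : j ∈ ({f,g,h,l} : Finset (Fin 4)) := hperm ▸ Finset.mem_univ j
    simpa using hj
  let ψ : (Fin 4 → Fin (d^2-1)) ≃ (Fin (d^2-1) × Fin (d^2-1) × Fin (d^2-1)) × Fin (d^2-1) :=
    { toFun := fun a => ((a f, a g, a h), a l)
      invFun := fun rc j =>
        if j = f then rc.1.1 else if j = g then rc.1.2.1 else if j = h then rc.1.2.2 else rc.2
      left_inv := by
        intro a
        funext j
        rcases hmem j with rfl | rfl | rfl | rfl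
        · simp
        · simp [Ne.symm hfg]
        · simp [Ne.symm hfh, Ne.symm hgh]
        · simp [Ne.symm hfl, Ne.symm hgl, Ne.symm hhl]
      right_inv := by
        intro rc
        obtain ⟨⟨r1, r2, r3⟩, c⟩ := rc
        simp [Ne.symm hfg, Ne.symm hfh, Ne.symm hfl, Ne.symm hgh, Ne.symm hgl, Ne.symm hhl] }
  have hTsum : ∑ p : (Fin (d^2-1) × Fin (d^2-1) × Fin (d^2-1)) × Fin (d^2-1),
      (T3v1 lam ρ f g h l p.1 p.2)^2
      = ∑ a : Fin 4 → Fin (d^2-1), (corrFull lam ρ a)^2 := by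
    rw [← Equiv.sum_comp ψ (fun p : (Fin (d^2-1) × Fin (d^2-1) × Fin (d^2-1)) × Fin (d^2-1) =>
      (T3v1 lam ρ f g h l p.1 p.2)^2)]
    refine Finset.sum_congr rfl fun a _ => ?_
    have heq : T3v1 lam ρ f g h l (ψ a).1 (ψ a).2 = corrFull lam ρ a := by
      show corrFull lam ρ (fun j =>
        if j = f then a f else if j = g then a g else if j = h then a h else a l)
        = corrFull lam ρ a
      exact congrArg (corrFull lam ρ) (ψ.left_inv a)
    rw [heq]
  have hcorr : ∀ a : Fin 4 → Fin (d^2-1), (corrFull lam ρ a)^2 ≤ ‖(ρ * lamBig lam a).trace‖^2 := by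
    intro a
    have h0 : corrFull lam ρ a = ((ρ * lamBig lam a).trace).re := rfl
    rw [h0, ← sq_abs]
    have h1 : |((ρ * lamBig lam a).trace).re| ≤ ‖(ρ * lamBig lam a).trace‖ := by
      exact Complex.abs_re_le_norm _
    exact pow_le_pow_left₀ (abs_nonneg _) h1 2
  have hFrob : ∑ p : (Fin (d^2-1) × Fin (d^2-1) × Fin (d^2-1)) × Fin (d^2-1),
      (T3v1 lam ρ f g h l p.1 p.2)^2 ≤ 16 * q^2 := by
    rw [hTsum]
    exact (Finset.sum_le_sum fun a _ => hcorr a).trans hSall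
  -- Ky Fan bound
  unfold kyFan
  refine Finset.sup'_le _ _ fun s hs => ?_
  have hsk : s.card ≤ k := (Finset.mem_filter.mp hs).2
  set M := T3v1 lam ρ f g h l with hM
  have hσ : ∀ i, singVals M i ^ 2
      = (Matrix.isHermitian_conjTranspose_mul_self M).eigenvalues i := fun i =>
    Real.sq_sqrt (Matrix.eigenvalues_conjTranspose_mul_self_nonneg M i)
  have hsum_eig : ∑ i, singVals M i ^ 2 = (Mᴴ * M).trace := by
    rw [Finset.sum_congr rfl fun i _ => hσ i]
    have := trace_eq_sum_eigs (Matrix.isHermitian_conjTranspose_mul_self M)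
    rw [this]
    simp [RCLike.ofReal_real_eq_id]
  have htrace_sum : (Mᴴ * M).trace
      = ∑ p : (Fin (d^2-1) × Fin (d^2-1) × Fin (d^2-1)) × Fin (d^2-1), (M p.1 p.2)^2 := by
    rw [trace_expand, Fintype.sum_prod_type]
    simp only [Matrix.conjTranspose_apply, star_trivial]
    rw [Finset.sum_comm]
    simp [sq]
  have hchain : (∑ i ∈ s, singVals M i)^2 ≤ (k:ℝ) * (16 * q^2) := by
    calc (∑ i ∈ s, singVals M i)^2
        ≤ (s.card : ℝ) * ∑ i ∈ s, singVals M i ^ 2 := sq_sum_le_card_mul_sum_sq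
      _ ≤ (k:ℝ) * ∑ i, singVals M i ^ 2 := by
          apply mul_le_mul (by exact_mod_cast hsk)
            (Finset.sum_le_sum_of_subset_of_nonneg (Finset.subset_univ s)
              (fun i _ _ => sq_nonneg _))
            (Finset.sum_nonneg fun i _ => sq_nonneg _) (by positivity)
      _ ≤ (k:ℝ) * (16 * q^2) := by
          apply mul_le_mul_of_nonneg_left ?_ (by positivity)
          rw [hsum_eig, htrace_sum]
          exact hFrob
  have hnn : (0:ℝ) ≤ ∑ i ∈ s, singVals M i :=
    Finset.sum_nonneg fun i _ => Real.sqrt_nonneg _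
  have h1 : ∑ i ∈ s, singVals M i ≤ Real.sqrt ((k:ℝ) * (16 * q^2)) :=
    (Real.le_sqrt hnn (by positivity)).mpr hchain
  refine h1.trans ?_
  rw [show (k:ℝ) * (16 * q^2) = (k:ℝ) * (4*q)^2 from by ring,
    Real.sqrt_mul (by positivity) ((4*q)^2),
    Real.sqrt_sq (by positivity)]
  rw [hqdef]
  rw [show 4 * Real.sqrt k * ((d:ℝ)^2 - 1) / (d:ℝ)^2
    = Real.sqrt k * (4 * (((d:ℝ)^2 - 1) / (d:ℝ)^2)) from by ring]
end

section
/- (Lemma 4(ii)) Let f,g,h,l be a permutation of 1,2,3,4 and let ρ be a pure density matrix on (ℂ^d)^{⊗4} that is separable under at least one bipartition of {1,2,3,4} (i.e. ρ = ρ_A ⊗ ρ_B, up to permutation of tensor factors, for some bipartition A|B into two nonempty complementary subsets) but entangled (not separable) under the bipartition fg|hl. Then for every k = 1,…,d²−1, ‖T_{fg|hl}‖_k ≤ 4k(d²−1)/d². -/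
open Matrix ComplexOrder

/-- The matricization `T_{fg|hl}` of the 4-body correlation tensor: rows indexed by
`(i_f, i_g)`, columns by `(i_h, i_l)`. -/
noncomputable def T2v2 {d : ℕ} (lam : Fin (d ^ 2 - 1) → Matrix (Fin d) (Fin d) ℂ)
    (ρ : Matrix (Fin 4 → Fin d) (Fin 4 → Fin d) ℂ) (f g h l : Fin 4) :
    Matrix (Fin (d ^ 2 - 1) × Fin (d ^ 2 - 1)) (Fin (d ^ 2 - 1) × Fin (d ^ 2 - 1)) ℝ :=
  Matrix.of fun r c => corrFull lam ρ
    (fun j => if j = f then r.1 else if j = g then r.2 else if j = h then c.1 else c.2)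


set_option linter.unusedSectionVars false
set_option maxHeartbeats 2000000

namespace Lemma4Aux

noncomputable def Bmat {d : ℕ} (lam : Fin (d ^ 2 - 1) → Matrix (Fin d) (Fin d) ℂ)
    {ι : Type*} [Fintype ι] (b : ι → Fin (d ^ 2 - 1)) :
    Matrix (ι → Fin d) (ι → Fin d) ℂ :=
  Matrix.of fun v w => ∏ j, lam (b j) (v j) (w j)

noncomputable def vec {α : Type*} [Fintype α] (M : Matrix α α ℂ) : EuclideanSpace ℂ (α × α) :=
  (WithLp.equiv 2 ((α × α) → ℂ)).symm (fun p => M p.1 p.2)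

lemma inner_vec {α : Type*} [Fintype α] (X Y : Matrix α α ℂ) :
    (inner ℂ (vec X) (vec Y) : ℂ) = (Xᴴ * Y).trace := by
  simp only [vec, PiLp.inner_apply, RCLike.inner_apply, WithLp.equiv_symm_apply, PiLp.toLp_apply,
    Matrix.trace, Matrix.diag, Matrix.mul_apply, Matrix.conjTranspose_apply]
  rw [Fintype.sum_prod_type, Finset.sum_comm]
  exact Finset.sum_congr rfl fun _ _ => Finset.sum_congr rfl fun _ _ => mul_comm _ _

lemma norm_vec_sq {α : Type*} [Fintype α] (X : Matrix α α ℂ) :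
    ‖vec X‖ ^ 2 = ((Xᴴ * X).trace).re := by
  rw [← inner_vec, ← RCLike.re_to_complex, @inner_self_eq_norm_sq ℂ]

lemma trace_mul_apply' {R : Type*} [NonUnitalNonAssocSemiring R] {α β : Type*} [Fintype α]
    [Fintype β] (X : Matrix α β R) (Y : Matrix β α R) :
    (X * Y).trace = ∑ v, ∑ w, X v w * Y w v := by
  simp [Matrix.trace, Matrix.diag, Matrix.mul_apply]

variable {d : ℕ} {lam : Fin (d ^ 2 - 1) → Matrix (Fin d) (Fin d) ℂ}
variable {ι : Type*} [Fintype ι] [DecidableEq ι]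

lemma trace_Bmat_mul_Bmat (horth : ∀ i j, (lam i * lam j).trace = if i = j then 2 else 0)
    (b c : ι → Fin (d ^ 2 - 1)) :
    (Bmat lam b * Bmat lam c).trace = ∏ j, (lam (b j) * lam (c j)).trace := by
  rw [trace_mul_apply']
  simp only [Bmat, Matrix.of_apply]
  have h0 : ∀ v w : ι → Fin d,
      (∏ j, lam (b j) (v j) (w j)) * ∏ j, lam (c j) (w j) (v j)
        = ∏ j, (lam (b j) (v j) (w j) * lam (c j) (w j) (v j)) := by
    intro v w; rw [← Finset.prod_mul_distrib]
  simp_rw [h0]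
  have h1 : ∀ v : ι → Fin d,
      ∑ w : ι → Fin d, ∏ j, (lam (b j) (v j) (w j) * lam (c j) (w j) (v j))
        = ∏ j, ∑ x, lam (b j) (v j) x * lam (c j) x (v j) := by
    intro v
    exact (Fintype.prod_sum (fun j x => lam (b j) (v j) x * lam (c j) x (v j))).symm
  simp_rw [h1]
  rw [← Fintype.prod_sum (fun j y => ∑ x, lam (b j) y x * lam (c j) x y)]
  refine Finset.prod_congr rfl fun j _ => ?_
  simp [Matrix.trace, Matrix.diag, Matrix.mul_apply]

lemma trace_Bmat [Nonempty ι] (htr : ∀ i, (lam i).trace = 0) (b : ι → Fin (d ^ 2 - 1)) :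
    (Bmat lam b).trace = 0 := by
  have : (Bmat lam b).trace = ∏ j, (lam (b j)).trace := by
    simp only [Matrix.trace, Matrix.diag, Bmat, Matrix.of_apply]
    rw [← Fintype.prod_sum (fun j x => lam (b j) x x)]
  rw [this]
  simp [htr]

lemma Bmat_conjTranspose (hherm : ∀ i, (lam i).IsHermitian) (b : ι → Fin (d ^ 2 - 1)) :
    (Bmat lam b)ᴴ = Bmat lam b := by
  ext v w
  simp only [Matrix.conjTranspose_apply, Bmat, Matrix.of_apply, star_prod]
  refine Finset.prod_congr rfl fun j _ => ?_
  simpa using (hherm (b j)).apply (v j) (w j)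

lemma sum_eigenvalues_eq_trace {𝕜 : Type*} [RCLike 𝕜] {n : Type*} [Fintype n] [DecidableEq n]
    {A : Matrix n n 𝕜} (hA : A.IsHermitian) :
    A.trace = ∑ i, (hA.eigenvalues i : 𝕜) := by
  have hU : star (hA.eigenvectorUnitary : Matrix n n 𝕜) * (hA.eigenvectorUnitary : Matrix n n 𝕜) = 1 :=
    (Matrix.mem_unitaryGroup_iff').mp (hA.eigenvectorUnitary).2
  conv_lhs => rw [hA.spectral_theorem, Unitary.conjStarAlgAut_apply]
  rw [Matrix.trace_mul_cycle, hU, Matrix.one_mul]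
  simp [Matrix.trace_diagonal]

lemma trace_sq_eq {𝕜 : Type*} [RCLike 𝕜] {n : Type*} [Fintype n] [DecidableEq n]
    {A : Matrix n n 𝕜} (hA : A.IsHermitian) :
    (A * A).trace = ∑ i, (hA.eigenvalues i : 𝕜) ^ 2 := by
  set U : Matrix n n 𝕜 := (hA.eigenvectorUnitary : Matrix n n 𝕜)
  set D : Matrix n n 𝕜 := Matrix.diagonal (RCLike.ofReal ∘ hA.eigenvalues)
  have hU : star U * U = 1 := (Matrix.mem_unitaryGroup_iff').mp (hA.eigenvectorUnitary).2
  have h1 : A * A = U * (D * D) * star U := by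
    conv_lhs => rw [hA.spectral_theorem, Unitary.conjStarAlgAut_apply]
    calc U * D * star U * (U * D * star U)
        = U * D * (star U * U) * (D * star U) := by
          simp only [Matrix.mul_assoc]
      _ = U * (D * D) * star U := by rw [hU]; simp only [Matrix.mul_one, Matrix.mul_assoc]
  rw [h1, Matrix.trace_mul_cycle, ← Matrix.mul_assoc, hU, Matrix.one_mul]
  simp [D, Matrix.diagonal_mul_diagonal, Matrix.trace_diagonal, pow_two]

lemma trace_sq_le_one {n : Type*} [Fintype n] [DecidableEq n] {A : Matrix n n ℂ}
    (hA : A.PosSemidef) (h1 : A.trace = 1) : ((A * A).trace).re ≤ 1 := by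
  have hsum : ∑ i, hA.1.eigenvalues i = 1 := by
    have := sum_eigenvalues_eq_trace hA.1
    rw [h1] at this
    have := congrArg Complex.re this.symm
    simpa using this
  have hsq : ((A * A).trace).re = ∑ i, hA.1.eigenvalues i ^ 2 := by
    rw [trace_sq_eq hA.1]
    simp [← Complex.ofReal_pow]
  rw [hsq, ← one_pow 2, ← hsum]
  exact Finset.sum_sq_le_sq_sum_of_nonneg fun i _ => hA.eigenvalues_nonneg i

lemma bessel [Nonempty ι] (hd : 1 ≤ d)
    (hherm : ∀ i, (lam i).IsHermitian)
    (htr : ∀ i, (lam i).trace = 0)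
    (horth : ∀ i j, (lam i * lam j).trace = if i = j then 2 else 0)
    (ρ : Matrix (ι → Fin d) (ι → Fin d) ℂ) (hpsd : ρ.PosSemidef) (htrρ : ρ.trace = 1) :
    ∑ b : ι → Fin (d ^ 2 - 1), ‖(ρ * Bmat lam b).trace‖ ^ 2
      ≤ 2 ^ Fintype.card ι * (1 - ((d : ℝ) ^ Fintype.card ι)⁻¹) := by
  classical
  set m := Fintype.card ι with hm
  have hd0 : (0:ℝ) < (d:ℝ) := by exact_mod_cast hd
  have hDr : (0:ℝ) < (d:ℝ) ^ m := by positivity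
  have h2r : (0:ℝ) < (2:ℝ) ^ m := by positivity
  set c0 : ℝ := (Real.sqrt ((d:ℝ) ^ m))⁻¹ with hc0
  set c1 : ℝ := (Real.sqrt ((2:ℝ) ^ m))⁻¹ with hc1
  have hc0sq : c0 * c0 = ((d:ℝ) ^ m)⁻¹ := by
    rw [hc0, ← mul_inv, Real.mul_self_sqrt hDr.le]
  have hc1sq : c1 * c1 = ((2:ℝ) ^ m)⁻¹ := by
    rw [hc1, ← mul_inv, Real.mul_self_sqrt h2r.le]
  set v : Option (ι → Fin (d ^ 2 - 1)) → EuclideanSpace ℂ ((ι → Fin d) × (ι → Fin d)) :=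
    fun o => Option.elim o ((c0:ℂ) • vec 1) (fun b => (c1:ℂ) • vec (Bmat lam b)) with hv
  have hBB : ∀ b c : ι → Fin (d ^ 2 - 1),
      (inner ℂ (vec (Bmat lam b)) (vec (Bmat lam c)) : ℂ) = if b = c then (2:ℂ) ^ m else 0 := by
    intro b c
    rw [inner_vec, Bmat_conjTranspose hherm, trace_Bmat_mul_Bmat horth]
    simp_rw [horth]
    by_cases hbc : b = c
    · subst hbc
      simp [Finset.prod_const, Finset.card_univ, hm]
    · rw [if_neg hbc]
      obtain ⟨j, hj⟩ := Function.ne_iff.mp hbc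
      exact Finset.prod_eq_zero (Finset.mem_univ j) (if_neg hj)
  have h1B : ∀ b, (inner ℂ (vec (1 : Matrix (ι → Fin d) (ι → Fin d) ℂ)) (vec (Bmat lam b)) : ℂ) = 0 := by
    intro b
    rw [inner_vec, Matrix.conjTranspose_one, Matrix.one_mul, trace_Bmat htr]
  have hB1 : ∀ b, (inner ℂ (vec (Bmat lam b)) (vec (1 : Matrix (ι → Fin d) (ι → Fin d) ℂ)) : ℂ) = 0 := by
    intro b
    rw [inner_vec, Bmat_conjTranspose hherm, Matrix.mul_one, trace_Bmat htr]
  have h11 : (inner ℂ (vec (1 : Matrix (ι → Fin d) (ι → Fin d) ℂ)) (vec 1) : ℂ) = ((d:ℝ) ^ m : ℝ) := by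
    rw [inner_vec, Matrix.conjTranspose_one, Matrix.one_mul, Matrix.trace_one]
    push_cast
    norm_cast
    simp [Fintype.card_fun, hm]
  have hortho : Orthonormal ℂ v := by
    rw [orthonormal_iff_ite]
    rintro (_ | b) (_ | c)
    · simp only [hv, Option.elim, inner_smul_left, inner_smul_right, h11, Complex.conj_ofReal]
      rw [if_pos trivial]
      have hr : c0 * (c0 * ((d:ℝ) ^ m)) = 1 := by
        rw [← mul_assoc, hc0sq]; exact inv_mul_cancel₀ hDr.ne'
      exact_mod_cast hr
    · simp only [hv, Option.elim, inner_smul_left, inner_smul_right, h1B, Complex.conj_ofReal]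
      simp
    · simp only [hv, Option.elim, inner_smul_left, inner_smul_right, hB1, Complex.conj_ofReal]
      simp
    · simp only [hv, Option.elim, inner_smul_left, inner_smul_right, hBB, Complex.conj_ofReal]
      by_cases hbc : b = c
      · subst hbc
        rw [if_pos rfl, if_pos rfl]
        have hr : c1 * (c1 * (2:ℝ) ^ m) = 1 := by
          rw [← mul_assoc, hc1sq]
          exact inv_mul_cancel₀ h2r.ne'
        exact_mod_cast hr
      · rw [if_neg hbc, if_neg (by simpa using hbc)]
        simp
  have hbessel := hortho.sum_inner_products_le (vec ρ) (s := Finset.univ)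
  rw [Fintype.sum_option] at hbessel
  have hnone : ‖(inner ℂ (v none) (vec ρ) : ℂ)‖ ^ 2 = ((d:ℝ) ^ m)⁻¹ := by
    have : (inner ℂ (v none) (vec ρ) : ℂ) = (c0 : ℂ) := by
      simp only [hv, Option.elim, inner_smul_left, Complex.conj_ofReal]
      rw [inner_vec, Matrix.conjTranspose_one, Matrix.one_mul, htrρ, mul_one]
    rw [this]
    rw [Complex.norm_real, Real.norm_eq_abs, sq_abs, pow_two, hc0sq]
  have hsome : ∀ b, ‖(inner ℂ (v (some b)) (vec ρ) : ℂ)‖ ^ 2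
      = ((2:ℝ) ^ m)⁻¹ * ‖(ρ * Bmat lam b).trace‖ ^ 2 := by
    intro b
    have : (inner ℂ (v (some b)) (vec ρ) : ℂ) = (c1 : ℂ) * (ρ * Bmat lam b).trace := by
      simp only [hv, Option.elim, inner_smul_left, Complex.conj_ofReal]
      rw [inner_vec, Bmat_conjTranspose hherm, Matrix.trace_mul_comm]
    rw [this, norm_mul, mul_pow, Complex.norm_real, Real.norm_eq_abs, sq_abs, pow_two, hc1sq]
  have hrhs : ‖vec ρ‖ ^ 2 ≤ 1 := by
    rw [norm_vec_sq, hpsd.1]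
    exact trace_sq_le_one hpsd htrρ
  simp_rw [hnone, hsome] at hbessel
  rw [← Finset.mul_sum] at hbessel
  have h3 : ((2:ℝ) ^ m)⁻¹ * ∑ b : ι → Fin (d ^ 2 - 1), ‖(ρ * Bmat lam b).trace‖ ^ 2
      ≤ 1 - ((d:ℝ) ^ m)⁻¹ := by linarith [le_trans hbessel hrhs]
  calc ∑ b : ι → Fin (d ^ 2 - 1), ‖(ρ * Bmat lam b).trace‖ ^ 2
      = 2 ^ m * (((2:ℝ) ^ m)⁻¹ * ∑ b : ι → Fin (d ^ 2 - 1), ‖(ρ * Bmat lam b).trace‖ ^ 2) := by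
        rw [← mul_assoc, mul_inv_cancel₀ h2r.ne', one_mul]
    _ ≤ 2 ^ m * (1 - ((d:ℝ) ^ m)⁻¹) := by
        apply mul_le_mul_of_nonneg_left h3 h2r.le

lemma sep_factor {n : ℕ} {A : Finset (Fin n)}
    (ρA : Matrix ({j // j ∈ A} → Fin d) ({j // j ∈ A} → Fin d) ℂ)
    (ρB : Matrix ({j // j ∉ A} → Fin d) ({j // j ∉ A} → Fin d) ℂ)
    (ρ : Matrix (Fin n → Fin d) (Fin n → Fin d) ℂ)
    (hfac : ∀ v w, ρ v w
      = ρA (fun j => v j.1) (fun j => w j.1) * ρB (fun j => v j.1) (fun j => w j.1))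
    (a : Fin n → Fin (d ^ 2 - 1)) :
    (ρ * Bmat lam a).trace
      = (ρA * Bmat lam (fun j : {j // j ∈ A} => a j.1)).trace
        * (ρB * Bmat lam (fun j : {j // j ∉ A} => a j.1)).trace := by
  classical
  rw [trace_mul_apply', trace_mul_apply', trace_mul_apply']
  set e := Equiv.piEquivPiSubtypeProd (fun j : Fin n => j ∈ A) (fun _ => Fin d) with he
  have hsum : ∀ (F : (Fin n → Fin d) → ℂ), ∑ v, F v = ∑ p : _ × _, F (e.symm p) :=
    fun F => (Equiv.sum_comp e.symm F).symm
  have hr1 : ∀ (v1 : {j // j ∈ A} → Fin d) (v2 : {j // j ∉ A} → Fin d),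
      (fun j : {j // j ∈ A} => (e.symm (v1, v2)) j.1) = v1 := by
    intro v1 v2; funext j
    simp [he, Equiv.piEquivPiSubtypeProd_symm_apply, j.2]
  have hr2 : ∀ (v1 : {j // j ∈ A} → Fin d) (v2 : {j // j ∉ A} → Fin d),
      (fun j : {j // j ∉ A} => (e.symm (v1, v2)) j.1) = v2 := by
    intro v1 v2; funext j
    simp [he, Equiv.piEquivPiSubtypeProd_symm_apply, j.2]
  have hBsplit : ∀ v w : Fin n → Fin d,
      Bmat lam a w v
        = Bmat lam (fun j : {j // j ∈ A} => a j.1) (fun j => w j.1) (fun j => v j.1)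
          * Bmat lam (fun j : {j // j ∉ A} => a j.1) (fun j => w j.1) (fun j => v j.1) := by
    intro v w
    simp only [Bmat, Matrix.of_apply]
    rw [← Fintype.prod_subtype_mul_prod_subtype (fun j => j ∈ A)
      (fun j => lam (a j) (w j) (v j))]
    congr!
  calc ∑ v, ∑ w, ρ v w * Bmat lam a w v
      = ∑ p : _ × _, ∑ q : _ × _, ρ (e.symm p) (e.symm q) * Bmat lam a (e.symm q) (e.symm p) := by
        rw [hsum (fun v => ∑ w, ρ v w * Bmat lam a w v)]
        exact Finset.sum_congr rfl fun p _ =>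
          hsum (fun w => ρ (e.symm p) w * Bmat lam a w (e.symm p))
    _ = ∑ p : _ × _, ∑ q : _ × _,
          (ρA p.1 q.1 * Bmat lam (fun j : {j // j ∈ A} => a j.1) q.1 p.1)
            * (ρB p.2 q.2 * Bmat lam (fun j : {j // j ∉ A} => a j.1) q.2 p.2) := by
        refine Finset.sum_congr rfl fun p _ => Finset.sum_congr rfl fun q _ => ?_
        rw [hfac, hBsplit]
        rw [hr1 p.1 p.2, hr2 p.1 p.2, hr1 q.1 q.2, hr2 q.1 q.2]
        ring
    _ = (∑ v1, ∑ w1, ρA v1 w1 * Bmat lam (fun j : {j // j ∈ A} => a j.1) w1 v1)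
          * (∑ v2, ∑ w2, ρB v2 w2 * Bmat lam (fun j : {j // j ∉ A} => a j.1) w2 v2) := by
        simp_rw [Fintype.sum_prod_type]
        rw [Finset.sum_mul_sum]
        refine Finset.sum_congr rfl fun v1 _ => Finset.sum_congr rfl fun v2 _ => ?_
        exact (Finset.sum_mul_sum _ _ _ _).symm

lemma sum_sep_factor {n : ℕ} {A : Finset (Fin n)}
    (G1 : ({j // j ∈ A} → Fin (d ^ 2 - 1)) → ℝ) (G2 : ({j // j ∉ A} → Fin (d ^ 2 - 1)) → ℝ) :
    ∑ a : Fin n → Fin (d ^ 2 - 1),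
        G1 (fun j : {j // j ∈ A} => a j.1) * G2 (fun j : {j // j ∉ A} => a j.1)
      = (∑ b1, G1 b1) * (∑ b2, G2 b2) := by
  classical
  set e := Equiv.piEquivPiSubtypeProd (fun j : Fin n => j ∈ A) (fun _ => Fin (d ^ 2 - 1)) with he
  have hr1 : ∀ (v1 : {j // j ∈ A} → Fin (d ^ 2 - 1)) (v2 : {j // j ∉ A} → Fin (d ^ 2 - 1)),
      (fun j : {j // j ∈ A} => (e.symm (v1, v2)) j.1) = v1 := by
    intro v1 v2; funext j
    simp [he, Equiv.piEquivPiSubtypeProd_symm_apply, j.2]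
  have hr2 : ∀ (v1 : {j // j ∈ A} → Fin (d ^ 2 - 1)) (v2 : {j // j ∉ A} → Fin (d ^ 2 - 1)),
      (fun j : {j // j ∉ A} => (e.symm (v1, v2)) j.1) = v2 := by
    intro v1 v2; funext j
    simp [he, Equiv.piEquivPiSubtypeProd_symm_apply, j.2]
  rw [← Equiv.sum_comp e.symm
    (fun a => G1 (fun j : {j // j ∈ A} => a j.1) * G2 (fun j : {j // j ∉ A} => a j.1))]
  rw [Fintype.sum_prod_type, Finset.sum_mul_sum]
  refine Finset.sum_congr rfl fun v1 _ => Finset.sum_congr rfl fun v2 _ => ?_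
  simp only [hr1 v1 v2, hr2 v1 v2]

lemma numeric_bound (d m : ℕ) (hd : 2 ≤ d) (hm1 : 1 ≤ m) (hm3 : m ≤ 3) :
    2 ^ m * (1 - ((d:ℝ) ^ m)⁻¹) * (2 ^ (4 - m) * (1 - ((d:ℝ) ^ (4 - m))⁻¹))
      ≤ (4 * ((d : ℝ) ^ 2 - 1) / (d : ℝ) ^ 2) ^ 2 := by
  have hx : (2:ℝ) ≤ (d:ℝ) := by exact_mod_cast hd
  have hx0 : (0:ℝ) < (d:ℝ) := by linarith
  interval_cases m <;>
  · norm_num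
    rw [div_pow, le_div_iff₀ (by positivity)]
    field_simp
    nlinarith [sq_nonneg ((d:ℝ) - 1), pow_pos hx0 2, pow_pos hx0 3, pow_pos hx0 4]

lemma frob_bound (hd : 2 ≤ d)
    (hherm : ∀ i, (lam i).IsHermitian) (htr : ∀ i, (lam i).trace = 0)
    (horth : ∀ i j, (lam i * lam j).trace = if i = j then 2 else 0)
    (ρ : Matrix (Fin 4 → Fin d) (Fin 4 → Fin d) ℂ)
    (A : Finset (Fin 4)) (hA1 : A.Nonempty) (hA2 : A ≠ Finset.univ)
    (hsep : SepUnder ρ A) :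
    ∑ a : Fin 4 → Fin (d ^ 2 - 1), ‖(ρ * Bmat lam a).trace‖ ^ 2
      ≤ (4 * ((d : ℝ) ^ 2 - 1) / (d : ℝ) ^ 2) ^ 2 := by
  classical
  obtain ⟨ρA, ρB, hApsd, hAtr, hBpsd, hBtr, hfac⟩ := hsep
  haveI hne1 : Nonempty {j // j ∈ A} := ⟨⟨hA1.choose, hA1.choose_spec⟩⟩
  haveI hne2 : Nonempty {j // j ∉ A} := by
    obtain ⟨j, hj⟩ : ∃ j, j ∉ A := by
      by_contra hcon; push_neg at hcon
      exact hA2 (Finset.eq_univ_iff_forall.mpr hcon)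
    exact ⟨⟨j, hj⟩⟩
  have hd1 : 1 ≤ d := le_trans (by norm_num) hd
  have hS1 := bessel (lam := lam) hd1 hherm htr horth ρA hApsd hAtr
  have hS2 := bessel (lam := lam) hd1 hherm htr horth ρB hBpsd hBtr
  have hcard1 : Fintype.card {j // j ∈ A} = A.card := by
    convert Fintype.card_coe A using 2
  have hcard2 : Fintype.card {j // j ∉ A} = 4 - A.card := by
    have hcc : Fintype.card {j // j ∉ A} = Fintype.card (Fin 4) - Fintype.card {j // j ∈ A} := by
      convert Fintype.card_subtype_compl (fun j : Fin 4 => j ∈ A) using 2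
    rw [hcc, hcard1, Fintype.card_fin]
  have hsum : ∑ a : Fin 4 → Fin (d ^ 2 - 1), ‖(ρ * Bmat lam a).trace‖ ^ 2
      = (∑ b1, ‖(ρA * Bmat lam b1).trace‖ ^ 2) * (∑ b2, ‖(ρB * Bmat lam b2).trace‖ ^ 2) := by
    have hsum' := sum_sep_factor (A := A) (fun b1 => ‖(ρA * Bmat lam b1).trace‖ ^ 2)
      (fun b2 => ‖(ρB * Bmat lam b2).trace‖ ^ 2)
    refine Eq.trans ?_ hsum'
    refine Finset.sum_congr rfl fun a _ => ?_
    rw [sep_factor ρA ρB ρ hfac a, norm_mul, mul_pow]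
  rw [hsum]
  have hm1 : 1 ≤ A.card := hA1.card_pos
  have hm3 : A.card ≤ 3 := by
    have h4 : A.card ≤ 4 := by simpa using Finset.card_le_univ A
    rcases lt_or_eq_of_le h4 with hlt | heq
    · omega
    · exact absurd ((Finset.card_eq_iff_eq_univ A).mp (by simpa using heq)) hA2
  rw [hcard1] at hS1
  rw [hcard2] at hS2
  have hx : (2:ℝ) ≤ (d:ℝ) := by exact_mod_cast hd
  have hx0 : (0:ℝ) < (d:ℝ) := by linarith
  have h1m : (1:ℝ) ≤ (d:ℝ) ^ A.card := one_le_pow₀ (by linarith)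
  have hb1 : (0:ℝ) ≤ 2 ^ A.card * (1 - ((d:ℝ) ^ A.card)⁻¹) := by
    have hi : ((d:ℝ) ^ A.card)⁻¹ ≤ 1 := inv_le_one_of_one_le₀ h1m
    exact mul_nonneg (by positivity) (by linarith)
  have hpos2 : (0:ℝ) ≤ ∑ b2, ‖(ρB * Bmat lam b2).trace‖ ^ 2 :=
    Finset.sum_nonneg fun _ _ => by positivity
  have step1 := mul_le_mul hS1 hS2 hpos2 hb1
  exact le_trans step1 (numeric_bound d A.card hd hm1 hm3)
end Lemma4Aux

/-- (Lemma 4(ii)) If a pure four-partite state is separable under at least one bipartition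
but entangled under the bipartition `fg|hl`, then `‖T_{fg|hl}‖_k ≤ 4k(d²-1)/d²`. -/
theorem kyFan_T2v2_of_entangled (d : ℕ) (hd : 2 ≤ d)
    (lam : Fin (d ^ 2 - 1) → Matrix (Fin d) (Fin d) ℂ)
    (hherm : ∀ i, (lam i).IsHermitian)
    (htr : ∀ i, (lam i).trace = 0)
    (horth : ∀ i j, (lam i * lam j).trace = if i = j then 2 else 0)
    (f g h l : Fin 4) (hperm : ({f, g, h, l} : Finset (Fin 4)) = Finset.univ)
    (ρ : Matrix (Fin 4 → Fin d) (Fin 4 → Fin d) ℂ)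
    (hpsd : ρ.PosSemidef) (htrρ : ρ.trace = 1) (hpure : ρ * ρ = ρ)
    (hsome : ∃ A : Finset (Fin 4), A.Nonempty ∧ A ≠ Finset.univ ∧ SepUnder ρ A)
    (hent : ¬ SepUnder ρ {f, g})
    (k : ℕ) (hk1 : 1 ≤ k) (hk2 : k ≤ d ^ 2 - 1) :
    kyFan k (T2v2 lam ρ f g h l) ≤ 4 * (k : ℝ) * ((d : ℝ) ^ 2 - 1) / (d : ℝ) ^ 2 := by
  classical
  obtain ⟨A, hA1, hA2, hsep⟩ := hsome
  have hneq : g ≠ f ∧ h ≠ f ∧ h ≠ g ∧ l ≠ f ∧ l ≠ g ∧ l ≠ h := by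
    revert hperm
    fin_cases f <;> fin_cases g <;> fin_cases h <;> fin_cases l <;> decide
  obtain ⟨hgf, hhf, hhg, hlf, hlg, hlh⟩ := hneq
  set M := T2v2 lam ρ f g h l with hM
  set B : ℝ := 4 * ((d : ℝ) ^ 2 - 1) / (d : ℝ) ^ 2 with hB
  have hx : (2:ℝ) ≤ (d:ℝ) := by exact_mod_cast hd
  have hBnn : 0 ≤ B := by
    rw [hB]
    apply div_nonneg _ (by positivity)
    nlinarith
  -- the correlation tensor entries, reindexed
  let φ : ((Fin (d ^ 2 - 1) × Fin (d ^ 2 - 1))) × ((Fin (d ^ 2 - 1) × Fin (d ^ 2 - 1))) → (Fin 4 → Fin (d ^ 2 - 1)) := fun rc j =>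
    if j = f then rc.1.1 else if j = g then rc.1.2 else if j = h then rc.2.1 else rc.2.2
  let ψ : (Fin 4 → Fin (d ^ 2 - 1)) → ((Fin (d ^ 2 - 1) × Fin (d ^ 2 - 1))) × ((Fin (d ^ 2 - 1) × Fin (d ^ 2 - 1))) := fun a => ((a f, a g), (a h, a l))
  have hφψ : ∀ a, φ (ψ a) = a := by
    intro a; funext j
    have hj : j = f ∨ j = g ∨ j = h ∨ j = l := by
      have : j ∈ ({f, g, h, l} : Finset (Fin 4)) := by rw [hperm]; exact Finset.mem_univ j
      simpa using this
    rcases hj with rfl | rfl | rfl | rfl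
    · simp [φ, ψ]
    · simp [φ, ψ, hgf]
    · simp [φ, ψ, hhf, hhg]
    · simp [φ, ψ, hlf, hlg, hlh]
  have hψφ : ∀ rc, ψ (φ rc) = rc := by
    intro rc
    simp [φ, ψ, hgf, hhf, hhg, hlf, hlg, hlh]
  let E : (((Fin (d ^ 2 - 1) × Fin (d ^ 2 - 1))) × ((Fin (d ^ 2 - 1) × Fin (d ^ 2 - 1)))) ≃ (Fin 4 → Fin (d ^ 2 - 1)) := ⟨φ, ψ, hψφ, hφψ⟩
  have hfrob : ∑ p : ((Fin (d ^ 2 - 1) × Fin (d ^ 2 - 1))) × ((Fin (d ^ 2 - 1) × Fin (d ^ 2 - 1))), (M p.1 p.2) ^ 2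
      = ∑ a : Fin 4 → Fin (d ^ 2 - 1), (corrFull lam ρ a) ^ 2 := by
    rw [← Equiv.sum_comp E (fun a => (corrFull lam ρ a) ^ 2)]
    rfl
  have hpt : ∀ a : Fin 4 → Fin (d ^ 2 - 1), (corrFull lam ρ a) ^ 2
      ≤ ‖(ρ * Lemma4Aux.Bmat lam a).trace‖ ^ 2 := by
    intro a
    have h1 : corrFull lam ρ a = ((ρ * Lemma4Aux.Bmat lam a).trace).re := rfl
    rw [h1]
    set z := (ρ * Lemma4Aux.Bmat lam a).trace with hz
    calc z.re ^ 2 = |z.re| ^ 2 := (sq_abs _).symm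
      _ ≤ ‖z‖ ^ 2 := by
          apply pow_le_pow_left₀ (abs_nonneg _)
          exact Complex.abs_re_le_norm z
  have hfb := Lemma4Aux.frob_bound hd hherm htr horth ρ A hA1 hA2 hsep
  have hF : ∑ p : ((Fin (d ^ 2 - 1) × Fin (d ^ 2 - 1))) × ((Fin (d ^ 2 - 1) × Fin (d ^ 2 - 1))), (M p.1 p.2) ^ 2 ≤ B ^ 2 := by
    rw [hfrob]
    calc ∑ a : Fin 4 → Fin (d ^ 2 - 1), (corrFull lam ρ a) ^ 2
        ≤ ∑ a : Fin 4 → Fin (d ^ 2 - 1), ‖(ρ * Lemma4Aux.Bmat lam a).trace‖ ^ 2 :=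
          Finset.sum_le_sum fun a _ => hpt a
      _ ≤ B ^ 2 := by rw [hB]; exact hfb
  -- the trace of `Mᵀ * M` is the Frobenius norm squared
  have hMherm := Matrix.isHermitian_conjTranspose_mul_self M
  have hpsdM : (Mᵀ * M).PosSemidef := by
    have h1 : Mᴴ = Mᵀ := by
      ext i j; simp [Matrix.conjTranspose_apply]
    have := Matrix.posSemidef_conjTranspose_mul_self M
    rwa [h1] at this
  have htraceM : ∑ p : ((Fin (d ^ 2 - 1) × Fin (d ^ 2 - 1))) × ((Fin (d ^ 2 - 1) × Fin (d ^ 2 - 1))), (M p.1 p.2) ^ 2 = (Mᵀ * M).trace := by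
    rw [Lemma4Aux.trace_mul_apply' (Mᵀ) M]
    rw [Fintype.sum_prod_type]
    rw [Finset.sum_comm]
    refine Finset.sum_congr rfl fun c _ => Finset.sum_congr rfl fun r _ => ?_
    simp [Matrix.transpose_apply, pow_two]
  have hsv : ∀ i, singVals M i ≤ B := by
    intro i
    have hsumev : ∑ j, hMherm.eigenvalues j = (Mᵀ * M).trace := by
      have := Lemma4Aux.sum_eigenvalues_eq_trace hMherm
      simpa using this.symm
    have hnn : ∀ j, 0 ≤ hMherm.eigenvalues j := fun j => hpsdM.eigenvalues_nonneg j
    have hev : hMherm.eigenvalues i ≤ B ^ 2 := by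
      calc hMherm.eigenvalues i ≤ ∑ j, hMherm.eigenvalues j :=
            Finset.single_le_sum (fun j _ => hnn j) (Finset.mem_univ i)
        _ = (Mᵀ * M).trace := hsumev
        _ = ∑ p : ((Fin (d ^ 2 - 1) × Fin (d ^ 2 - 1))) × ((Fin (d ^ 2 - 1) × Fin (d ^ 2 - 1))), (M p.1 p.2) ^ 2 := htraceM.symm
        _ ≤ B ^ 2 := hF
    calc singVals M i = Real.sqrt (hMherm.eigenvalues i) := rfl
      _ ≤ Real.sqrt (B ^ 2) := Real.sqrt_le_sqrt hev
      _ = B := by rw [Real.sqrt_sq hBnn]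
  have hky : kyFan k M ≤ (k : ℝ) * B := by
    unfold kyFan
    apply Finset.sup'_le
    intro s hs
    rw [Finset.mem_filter] at hs
    calc ∑ i ∈ s, singVals M i ≤ ∑ _i ∈ s, B := Finset.sum_le_sum fun i _ => hsv i
      _ = (s.card : ℝ) * B := by rw [Finset.sum_const, nsmul_eq_mul]
      _ ≤ (k : ℝ) * B := by
          apply mul_le_mul_of_nonneg_right _ hBnn
          exact_mod_cast hs.2
  calc kyFan k M ≤ (k : ℝ) * B := hky
    _ = 4 * (k : ℝ) * ((d : ℝ) ^ 2 - 1) / (d : ℝ) ^ 2 := by rw [hB]; ring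
end

section
/- Let n ≥ 2 and let ρ be a pure density matrix on (ℂ^d)^{⊗n}. Then the full correlation tensor satisfies Σ_{i₁,…,i_n=1}^{d²−1} (t_{i₁…i_n}^{(1,…,n)})² ≤ 2ⁿ(dⁿ−1)/dⁿ; equivalently ‖T^{(1,…,n)}‖ ≤ √(2ⁿ(dⁿ−1)/dⁿ). -/
open Matrix ComplexOrder

private lemma sum_sum_prod_eq' {n d : ℕ} (F : Fin n → Fin d → Fin d → ℂ) :
    ∑ v : Fin n → Fin d, ∑ w : Fin n → Fin d, ∏ j, F j (v j) (w j)
      = ∏ j, ∑ p, ∑ q, F j p q := by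
  calc ∑ v : Fin n → Fin d, ∑ w : Fin n → Fin d, ∏ j, F j (v j) (w j)
      = ∑ v : Fin n → Fin d, ∏ j, ∑ q, F j (v j) q := by
        refine Finset.sum_congr rfl fun v _ => ?_
        exact (Fintype.prod_sum fun j q => F j (v j) q).symm
    _ = ∏ j, ∑ p, ∑ q, F j p q := (Fintype.prod_sum fun j p => ∑ q, F j p q).symm

private lemma sum_prod_eq' {n d : ℕ} (F : Fin n → Fin d → ℂ) :
    ∑ v : Fin n → Fin d, ∏ j, F j (v j) = ∏ j, ∑ p, F j p :=
  (Fintype.prod_sum fun j p => F j p).symm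

/-- For a pure `n`-partite state, the full correlation tensor satisfies
`Σ (t^{(1,…,n)})² ≤ 2ⁿ(dⁿ-1)/dⁿ`; equivalently `‖T^{(1,…,n)}‖ ≤ √(2ⁿ(dⁿ-1)/dⁿ)`. -/
theorem full_correlation_bound_multipartite (d : ℕ) (hd : 2 ≤ d)
    (lam : Fin (d ^ 2 - 1) → Matrix (Fin d) (Fin d) ℂ)
    (hherm : ∀ i, (lam i).IsHermitian)
    (htr : ∀ i, (lam i).trace = 0)
    (horth : ∀ i j, (lam i * lam j).trace = if i = j then 2 else 0)
    (n : ℕ) (hn : 2 ≤ n)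
    (ρ : Matrix (Fin n → Fin d) (Fin n → Fin d) ℂ)
    (hpsd : ρ.PosSemidef) (htrρ : ρ.trace = 1) (hpure : ρ * ρ = ρ) :
    (∑ a : Fin n → Fin (d ^ 2 - 1), (corrFull lam ρ a) ^ 2)
        ≤ 2 ^ n * ((d : ℝ) ^ n - 1) / (d : ℝ) ^ n
    ∧ Real.sqrt (∑ a : Fin n → Fin (d ^ 2 - 1), (corrFull lam ρ a) ^ 2)
        ≤ Real.sqrt (2 ^ n * ((d : ℝ) ^ n - 1) / (d : ℝ) ^ n) := by
  classical
  have hd0 : (0:ℝ) < (d:ℝ) ^ n := by positivity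
  have h20 : (0:ℝ) < (2:ℝ) ^ n := by positivity
  -- entrywise hermitian facts
  have hlamc : ∀ i p q, (starRingEnd ℂ) (lam i p q) = lam i q p := fun i p q => (hherm i).apply q p
  -- σ matrices
  set σ : (Fin n → Fin (d ^ 2 - 1)) → Matrix (Fin n → Fin d) (Fin n → Fin d) ℂ :=
    fun a => Matrix.of (fun v w : Fin n → Fin d => ∏ j, lam (a j) (v j) (w j)) with hσ
  have hσc : ∀ a (v w : Fin n → Fin d), (starRingEnd ℂ) (σ a v w) = σ a w v := by
    intro a v w
    simp only [hσ, Matrix.of_apply, map_prod, hlamc]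
  -- embedding into Euclidean space
  set emb : Matrix (Fin n → Fin d) (Fin n → Fin d) ℂ →
      EuclideanSpace ℂ ((Fin n → Fin d) × (Fin n → Fin d)) :=
    fun M => WithLp.toLp 2 (fun p : (Fin n → Fin d) × (Fin n → Fin d) => M p.1 p.2) with hemb
  have hinner : ∀ A B, (inner ℂ (emb A) (emb B) : ℂ)
      = ∑ v : Fin n → Fin d, ∑ w : Fin n → Fin d, (starRingEnd ℂ) (A v w) * B v w := by
    intro A B
    simp only [PiLp.inner_apply, RCLike.inner_apply', hemb, PiLp.toLp_apply]
    exact Fintype.sum_prod_type (f := fun x => (starRingEnd ℂ) (A x.1 x.2) * B x.1 x.2)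
  -- inner products of basis elements
  have horthc : ∀ i j, (∑ p, ∑ q, (starRingEnd ℂ) (lam i p q) * lam j p q)
      = if i = j then 2 else 0 := by
    intro i j
    rw [← horth i j, Finset.sum_comm]
    simp only [Matrix.trace, Matrix.diag, Matrix.mul_apply, hlamc]
  have hσσ : ∀ a b, (inner ℂ (emb (σ a)) (emb (σ b)) : ℂ)
      = if a = b then (2:ℂ) ^ n else 0 := by
    intro a b
    rw [hinner]
    have : ∀ v w : Fin n → Fin d, (starRingEnd ℂ) (σ a v w) * σ b v w
        = ∏ j, (starRingEnd ℂ) (lam (a j) (v j) (w j)) * lam (b j) (v j) (w j) := by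
      intro v w
      simp only [hσ, Matrix.of_apply, map_prod, Finset.prod_mul_distrib]
    simp_rw [this]
    rw [sum_sum_prod_eq' fun j p q => (starRingEnd ℂ) (lam (a j) p q) * lam (b j) p q]
    simp_rw [horthc]
    by_cases hab : a = b
    · subst hab; simp
    · simp only [hab, if_false]
      obtain ⟨j, hj⟩ := Function.ne_iff.mp hab
      exact Finset.prod_eq_zero (Finset.mem_univ j) (by simp [hj])
  have htrσ : ∀ a, ∑ v : Fin n → Fin d, σ a v v = 0 := by
    intro a
    have : ∑ v : Fin n → Fin d, σ a v v = ∏ j, ∑ p, lam (a j) p p :=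
      sum_prod_eq' fun j p => lam (a j) p p
    rw [this]
    refine Finset.prod_eq_zero (Finset.mem_univ ⟨0, by omega⟩) (htr _)
  have h1σ : ∀ a, (inner ℂ (emb 1) (emb (σ a)) : ℂ) = 0 := by
    intro a
    rw [hinner]
    simp only [Matrix.one_apply, apply_ite (starRingEnd ℂ), _root_.map_one, map_zero, ite_mul,
      one_mul, zero_mul]
    simp only [Finset.sum_ite_eq, Finset.mem_univ, if_true]
    simpa using htrσ a
  have hσ1 : ∀ a, (inner ℂ (emb (σ a)) (emb 1) : ℂ) = 0 := by
    intro a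
    rw [← inner_conj_symm, h1σ, map_zero]
  have h11 : (inner ℂ (emb (1 : Matrix (Fin n → Fin d) (Fin n → Fin d) ℂ)) (emb 1) : ℂ)
      = (d:ℂ) ^ n := by
    rw [hinner]
    simp only [Matrix.one_apply, apply_ite (starRingEnd ℂ), _root_.map_one, map_zero, ite_mul,
      one_mul, zero_mul]
    simp [Finset.sum_ite_eq, Fintype.card_fun]
  -- scalar identities
  have hkd : ((Real.sqrt ((d:ℝ) ^ n) : ℝ) : ℂ)⁻¹ * (((Real.sqrt ((d:ℝ) ^ n) : ℝ) : ℂ)⁻¹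
      * (d:ℂ) ^ n) = 1 := by
    rw [← mul_assoc, ← mul_inv, ← Complex.ofReal_mul, Real.mul_self_sqrt hd0.le]
    push_cast
    field_simp
  have hk2 : ((Real.sqrt ((2:ℝ) ^ n) : ℝ) : ℂ)⁻¹ * (((Real.sqrt ((2:ℝ) ^ n) : ℝ) : ℂ)⁻¹
      * (2:ℂ) ^ n) = 1 := by
    rw [← mul_assoc, ← mul_inv, ← Complex.ofReal_mul, Real.mul_self_sqrt h20.le]
    push_cast
    field_simp
  -- orthonormal family
  set v : Option (Fin n → Fin (d ^ 2 - 1)) →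
      EuclideanSpace ℂ ((Fin n → Fin d) × (Fin n → Fin d)) :=
    fun o => o.elim (((Real.sqrt ((d:ℝ) ^ n) : ℝ) : ℂ)⁻¹ • emb 1)
      (fun a => ((Real.sqrt ((2:ℝ) ^ n) : ℝ) : ℂ)⁻¹ • emb (σ a)) with hv
  have hortho : Orthonormal ℂ v := by
    rw [orthonormal_iff_ite]
    rintro (_|a) (_|b) <;>
      simp only [hv, Option.elim, inner_smul_left, inner_smul_right, map_inv₀,
        Complex.conj_ofReal, h11, h1σ, hσ1, hσσ]
    · simpa using hkd
    · simp
    · simp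
    · by_cases hab : a = b
      · subst hab; simpa using hk2
      · simp [hab]
  -- Bessel's inequality
  have hbessel := hortho.sum_inner_products_le (s := Finset.univ) (emb ρ)
  -- compute ‖emb ρ‖ ^ 2 = 1
  have hρherm : ∀ p q, (starRingEnd ℂ) (ρ p q) = ρ q p := fun p q => hpsd.isHermitian.apply q p
  have hnormρ : ‖emb ρ‖ ^ 2 = 1 := by
    rw [← inner_self_eq_norm_sq (𝕜 := ℂ)]
    have : (inner ℂ (emb ρ) (emb ρ) : ℂ) = 1 := by
      rw [hinner]
      have : ∑ w : Fin n → Fin d, ∑ u : Fin n → Fin d, (starRingEnd ℂ) (ρ w u) * ρ w u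
          = (ρ * ρ).trace := by
        rw [Finset.sum_comm]
        simp only [Matrix.trace, Matrix.diag, Matrix.mul_apply, hρherm]
      rw [this, hpure, htrρ]
    rw [this]
    simp
  rw [hnormρ] at hbessel
  -- inner products with emb ρ
  have h1ρ : (inner ℂ (emb 1) (emb ρ) : ℂ) = 1 := by
    rw [hinner]
    simp only [Matrix.one_apply, apply_ite (starRingEnd ℂ), _root_.map_one, map_zero, ite_mul,
      one_mul, zero_mul]
    simp only [Finset.sum_ite_eq, Finset.mem_univ, if_true]
    simpa [Matrix.trace, Matrix.diag] using htrρ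
  have hσρ : ∀ a, (inner ℂ (emb (σ a)) (emb ρ) : ℂ) = (ρ * σ a).trace := by
    intro a
    rw [hinner]
    simp only [hσc, Matrix.trace, Matrix.diag, Matrix.mul_apply]
    exact Finset.sum_congr rfl fun p _ => Finset.sum_congr rfl fun q _ => mul_comm _ _
  -- norms of inner products
  have hnone : ‖(inner ℂ (v none) (emb ρ) : ℂ)‖ ^ 2 = ((d:ℝ) ^ n)⁻¹ := by
    simp only [hv, Option.elim, inner_smul_left, map_inv₀, Complex.conj_ofReal, h1ρ, mul_one]
    rw [norm_inv, Complex.norm_real, Real.norm_eq_abs, abs_of_nonneg (Real.sqrt_nonneg _)]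
    rw [← Real.sqrt_inv, Real.sq_sqrt (by positivity)]
  have hsome : ∀ a, (corrFull lam ρ a) ^ 2 / (2:ℝ) ^ n
      ≤ ‖(inner ℂ (v (some a)) (emb ρ) : ℂ)‖ ^ 2 := by
    intro a
    have hre : (corrFull lam ρ a) ^ 2 ≤ ‖(ρ * σ a).trace‖ ^ 2 := by
      have hcf : corrFull lam ρ a = ((ρ * σ a).trace).re := by
        unfold corrFull
        rw [hσ]
      rw [hcf, ← sq_abs]
      have h := Complex.abs_re_le_norm ((ρ * σ a).trace)
      exact pow_le_pow_left₀ (abs_nonneg _) h 2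
    simp only [hv, Option.elim, inner_smul_left, map_inv₀, Complex.conj_ofReal, hσρ]
    rw [norm_mul, mul_pow, norm_inv, Complex.norm_real, Real.norm_eq_abs,
      abs_of_nonneg (Real.sqrt_nonneg _), inv_pow, Real.sq_sqrt h20.le, div_eq_inv_mul]
    exact mul_le_mul_of_nonneg_left hre (by positivity)
  -- combine
  have hsum : ((d:ℝ) ^ n)⁻¹ + (∑ a : Fin n → Fin (d ^ 2 - 1), (corrFull lam ρ a) ^ 2) / 2 ^ n
      ≤ 1 := by
    calc ((d:ℝ) ^ n)⁻¹ + (∑ a : Fin n → Fin (d ^ 2 - 1), (corrFull lam ρ a) ^ 2) / 2 ^ n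
        = ‖(inner ℂ (v none) (emb ρ) : ℂ)‖ ^ 2
          + ∑ a : Fin n → Fin (d ^ 2 - 1), (corrFull lam ρ a) ^ 2 / 2 ^ n := by
          rw [hnone, Finset.sum_div]
      _ ≤ ‖(inner ℂ (v none) (emb ρ) : ℂ)‖ ^ 2
          + ∑ a : Fin n → Fin (d ^ 2 - 1), ‖(inner ℂ (v (some a)) (emb ρ) : ℂ)‖ ^ 2 := by
          gcongr with a
          exact hsome a
      _ = ∑ o : Option (Fin n → Fin (d ^ 2 - 1)), ‖(inner ℂ (v o) (emb ρ) : ℂ)‖ ^ 2 := by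
          rw [Fintype.sum_option]
      _ ≤ 1 := hbessel
  have hmain : (∑ a : Fin n → Fin (d ^ 2 - 1), (corrFull lam ρ a) ^ 2)
      ≤ 2 ^ n * ((d : ℝ) ^ n - 1) / (d : ℝ) ^ n := by
    have h' : (∑ a : Fin n → Fin (d ^ 2 - 1), (corrFull lam ρ a) ^ 2) / 2 ^ n
        ≤ 1 - ((d:ℝ) ^ n)⁻¹ := by linarith
    have h'' : (∑ a : Fin n → Fin (d ^ 2 - 1), (corrFull lam ρ a) ^ 2)
        ≤ (1 - ((d:ℝ) ^ n)⁻¹) * 2 ^ n := (div_le_iff₀ h20).mp h'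
    have heq : 2 ^ n * ((d : ℝ) ^ n - 1) / (d : ℝ) ^ n = (1 - ((d:ℝ) ^ n)⁻¹) * 2 ^ n := by
      field_simp
    linarith
  exact ⟨hmain, Real.sqrt_le_sqrt hmain⟩
end
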